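/- arXiv:1702.05467 — 7 statements merged into one kernel-verified Lean document; each statement's English description precedes it below -/
import Mathlib

section
/- No squared-star can have 5 single faces in 5 different planes: for every squared-star E, the number of planes that contain exactly one face of E is at most 4. -/
open scoped Classical
noncomputable section

/-- The vertex set `V = {±1, ±2, ±3, ±4} ⊆ ℤ`. -/
def Vset : Finset ℤ := {1, -1, 2, -2, 3, -3, 4, -4}

/-- An edge of the graph `G₈`: an unordered pair `{u, v}` of elements of `V`
with `|u| ≠ |v|`. -/
def IsFace (e : Finset ℤ) : Prop :=
  ∃ u ∈ Vset, ∃ v ∈ Vset, |u| ≠ |v| ∧ e = {u, v}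

/-- A squared-star: the edge set of a cycle in `G₈`, i.e. a set of at least 3
edges of `G₈` such that every incident vertex is incident to exactly two edges
and any two edges are connected by a chain of successively intersecting edges. -/
def SquaredStar (E : Finset (Finset ℤ)) : Prop :=
  3 ≤ E.card ∧
  (∀ e ∈ E, IsFace e) ∧
  (∀ v : ℤ, (∃ e ∈ E, v ∈ e) → (E.filter fun e => v ∈ e).card = 2) ∧
  ∀ e ∈ E, ∀ f ∈ E,
    Relation.ReflTransGen (fun a b => a ∈ E ∧ b ∈ E ∧ (a ∩ b).Nonempty) e f

/-- The plane of an edge `{u, v}`: the unordered pair `{|u|, |v|}`. -/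
def planeOf (e : Finset ℤ) : Finset ℤ := e.image fun x => |x|

/-- The number of faces of `E` lying in the plane `P`. -/
def planeCount (E : Finset (Finset ℤ)) (P : Finset ℤ) : ℕ :=
  (E.filter fun e => planeOf e = P).card

/-- The signature of a squared-star: the multiset of the numbers of faces in
each plane containing at least one face. -/
def signatureOf (E : Finset (Finset ℤ)) : Multiset ℕ :=
  (E.image planeOf).val.map fun P => planeCount E P

/-- A plane containing exactly two faces of `E` is of adjacent type if those
two faces share a vertex. -/
def AdjacentType (E : Finset (Finset ℤ)) (P : Finset ℤ) : Prop :=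
  planeCount E P = 2 ∧
  ∃ e ∈ E, ∃ f ∈ E, e ≠ f ∧ planeOf e = P ∧ planeOf f = P ∧ (e ∩ f).Nonempty

/-- The number of doubled planes of `E` of adjacent type. -/
def adjDoubledCount (E : Finset (Finset ℤ)) : ℕ :=
  ((E.image planeOf).filter fun P => AdjacentType E P).card

/-- An element of the hyperoctahedral group: a bijection of `V` commuting with
the antipodal map. -/
def IsHyperOct (g : ℤ → ℤ) : Prop :=
  Set.BijOn g ↑Vset ↑Vset ∧ ∀ v ∈ Vset, g (-v) = -g v

/-- The action of a signed permutation on a set of faces. -/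
def actStar (g : ℤ → ℤ) (E : Finset (Finset ℤ)) : Finset (Finset ℤ) :=
  E.image fun e => e.image g

/-- Two squared-stars are equivalent if a signed permutation carries one to the
other. -/
def StarEquiv (E F : Finset (Finset ℤ)) : Prop :=
  ∃ g : ℤ → ℤ, IsHyperOct g ∧ F = actStar g E


/-- The six planes. -/
def Pi6 : Finset (Finset ℤ) := {{1,2},{1,3},{1,4},{2,3},{2,4},{3,4}}

lemma planeOf_mem_Pi6 {e : Finset ℤ} (h : IsFace e) : planeOf e ∈ Pi6 := by
  obtain ⟨u, hu, v, hv, huv, rfl⟩ := h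
  simp only [Vset, Finset.mem_insert, Finset.mem_singleton] at hu hv
  rcases hu with rfl|rfl|rfl|rfl|rfl|rfl|rfl|rfl <;>
    rcases hv with rfl|rfl|rfl|rfl|rfl|rfl|rfl|rfl <;>
    revert huv <;> decide

lemma even_count (E : Finset (Finset ℤ)) (hE : SquaredStar E) (i : ℤ) (hi : 0 < i) :
    Even ((E.filter fun e => i ∈ planeOf e).card) := by
  obtain ⟨-, hface, hdeg, -⟩ := hE
  have key : ∀ e ∈ E, (i ∈ planeOf e ↔ (i ∈ e ∨ -i ∈ e)) := by
    intro e he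
    unfold planeOf
    simp only [Finset.mem_image]
    constructor
    · rintro ⟨x, hx, hxi⟩
      rcases (abs_eq hi.le).mp hxi with rfl | rfl
      · exact Or.inl hx
      · exact Or.inr (by simpa using hx)
    · rintro (h | h)
      · exact ⟨i, h, abs_of_pos hi⟩
      · exact ⟨-i, h, by rw [abs_neg, abs_of_pos hi]⟩
  rw [Finset.filter_congr key, Finset.filter_or]
  have hdisj : Disjoint (E.filter fun e => i ∈ e) (E.filter fun e => -i ∈ e) := by
    rw [Finset.disjoint_left]
    intro e he1 he2
    obtain ⟨heE, hie⟩ := Finset.mem_filter.mp he1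
    obtain ⟨-, hnie⟩ := Finset.mem_filter.mp he2
    obtain ⟨u, -, v, -, huv, rfl⟩ := hface e heE
    simp only [Finset.mem_insert, Finset.mem_singleton] at hie hnie
    rcases hie with h1 | h1 <;> rcases hnie with h2 | h2 <;>
      first
        | omega
        | exact huv (by rw [← h1, ← h2, abs_neg])
  rw [Finset.card_union_of_disjoint hdisj]
  have h2 : ∀ j : ℤ, (E.filter fun e => j ∈ e).card = 0 ∨
      (E.filter fun e => j ∈ e).card = 2 := by
    intro j
    by_cases hj : ∃ e ∈ E, j ∈ e
    · exact Or.inr (hdeg j hj)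
    · left
      rw [Finset.card_eq_zero, Finset.filter_eq_empty_iff]
      push_neg at hj
      exact hj
  rcases h2 i with h | h <;> rcases h2 (-i) with h' | h' <;> rw [h, h'] <;> decide

lemma count_decomp (E : Finset (Finset ℤ)) (i : ℤ) (P Q R : Finset ℤ)
    (hiff : ∀ e ∈ E, (i ∈ planeOf e ↔ planeOf e = P ∨ planeOf e = Q ∨ planeOf e = R))
    (hPQ : P ≠ Q) (hPR : P ≠ R) (hQR : Q ≠ R) :
    (E.filter fun e => i ∈ planeOf e).card
      = planeCount E P + planeCount E Q + planeCount E R := by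
  have hd : ∀ A B : Finset ℤ, A ≠ B →
      Disjoint (E.filter fun e => planeOf e = A) (E.filter fun e => planeOf e = B) := by
    intro A B hAB
    rw [Finset.disjoint_left]
    intro e he1 he2
    exact hAB ((Finset.mem_filter.mp he1).2 ▸ (Finset.mem_filter.mp he2).2 ▸ rfl)
  rw [Finset.filter_congr hiff, Finset.filter_or, Finset.filter_or,
    Finset.card_union_of_disjoint, Finset.card_union_of_disjoint (hd Q R hQR)]
  · unfold planeCount; omega
  · rw [Finset.disjoint_left]
    intro e he1 he2
    obtain ⟨-, hP⟩ := Finset.mem_filter.mp he1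
    rcases Finset.mem_union.mp he2 with h | h
    · exact hPQ (hP ▸ (Finset.mem_filter.mp h).2 ▸ rfl)
    · exact hPR (hP ▸ (Finset.mem_filter.mp h).2 ▸ rfl)

/-- No squared-star has 5 single faces in 5 different planes: the number of
planes containing exactly one face is at most 4. -/
theorem singles_at_most_four (E : Finset (Finset ℤ)) (hE : SquaredStar E) :
    ((E.image planeOf).filter fun P => planeCount E P = 1).card ≤ 4 := by
  by_contra hcon
  push_neg at hcon
  have hface := hE.2.1
  set S := (E.image planeOf).filter fun P => planeCount E P = 1 with hSdef
  have hS5 : 5 ≤ S.card := hcon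
  have hSsub : S ⊆ Pi6 := by
    intro P hP
    obtain ⟨hP1, -⟩ := Finset.mem_filter.mp hP
    obtain ⟨e, he, rfl⟩ := Finset.mem_image.mp hP1
    exact planeOf_mem_Pi6 (hface e he)
  have hpair : ∀ P ∈ Pi6, ∀ Q ∈ Pi6, P ≠ Q →
      planeCount E P = 1 ∨ planeCount E Q = 1 := by
    intro P hP Q hQ hPQ
    by_contra hc
    push_neg at hc
    have hsub2 : S ⊆ Pi6 \ {P, Q} := by
      intro x hx
      have hx1 := hSsub hx
      have hx2 : planeCount E x = 1 := (Finset.mem_filter.mp hx).2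
      rw [Finset.mem_sdiff]
      refine ⟨hx1, ?_⟩
      simp only [Finset.mem_insert, Finset.mem_singleton]
      rintro (rfl | rfl)
      · exact hc.1 hx2
      · exact hc.2 hx2
    have hle : S.card ≤ (Pi6 \ {P, Q}).card := Finset.card_le_card hsub2
    have hsub3 : ({P, Q} : Finset (Finset ℤ)) ⊆ Pi6 := by
      intro x hx
      simp only [Finset.mem_insert, Finset.mem_singleton] at hx
      rcases hx with rfl | rfl
      · exact hP
      · exact hQ
    have hcard : (Pi6 \ {P, Q}).card = Pi6.card - ({P, Q} : Finset (Finset ℤ)).card :=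
      Finset.card_sdiff_of_subset hsub3
    have h2 : ({P, Q} : Finset (Finset ℤ)).card = 2 := Finset.card_pair hPQ
    have h6 : Pi6.card = 6 := by decide
    omega
  have hPl : ∀ e ∈ E, planeOf e ∈ Pi6 := fun e he => planeOf_mem_Pi6 (hface e he)
  have hiff1 : ∀ e ∈ E, ((1:ℤ) ∈ planeOf e ↔
      planeOf e = {1,2} ∨ planeOf e = {1,3} ∨ planeOf e = {1,4}) := by
    intro e he
    have h6 := hPl e he
    simp only [Pi6, Finset.mem_insert, Finset.mem_singleton] at h6
    rcases h6 with h|h|h|h|h|h <;> rw [h] <;> decide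
  have hiff2 : ∀ e ∈ E, ((2:ℤ) ∈ planeOf e ↔
      planeOf e = {1,2} ∨ planeOf e = {2,3} ∨ planeOf e = {2,4}) := by
    intro e he
    have h6 := hPl e he
    simp only [Pi6, Finset.mem_insert, Finset.mem_singleton] at h6
    rcases h6 with h|h|h|h|h|h <;> rw [h] <;> decide
  have hiff3 : ∀ e ∈ E, ((3:ℤ) ∈ planeOf e ↔
      planeOf e = {1,3} ∨ planeOf e = {2,3} ∨ planeOf e = {3,4}) := by
    intro e he
    have h6 := hPl e he
    simp only [Pi6, Finset.mem_insert, Finset.mem_singleton] at h6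
    rcases h6 with h|h|h|h|h|h <;> rw [h] <;> decide
  have hiff4 : ∀ e ∈ E, ((4:ℤ) ∈ planeOf e ↔
      planeOf e = {1,4} ∨ planeOf e = {2,4} ∨ planeOf e = {3,4}) := by
    intro e he
    have h6 := hPl e he
    simp only [Pi6, Finset.mem_insert, Finset.mem_singleton] at h6
    rcases h6 with h|h|h|h|h|h <;> rw [h] <;> decide
  have e1 := even_count E hE 1 (by norm_num)
  have e2 := even_count E hE 2 (by norm_num)
  have e3 := even_count E hE 3 (by norm_num)
  have e4 := even_count E hE 4 (by norm_num)
  rw [count_decomp E 1 {1,2} {1,3} {1,4} hiff1 (by decide) (by decide) (by decide)] at e1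
  rw [count_decomp E 2 {1,2} {2,3} {2,4} hiff2 (by decide) (by decide) (by decide)] at e2
  rw [count_decomp E 3 {1,3} {2,3} {3,4} hiff3 (by decide) (by decide) (by decide)] at e3
  rw [count_decomp E 4 {1,4} {2,4} {3,4} hiff4 (by decide) (by decide) (by decide)] at e4
  obtain ⟨k1, hk1⟩ := e1
  obtain ⟨k2, hk2⟩ := e2
  obtain ⟨k3, hk3⟩ := e3
  obtain ⟨k4, hk4⟩ := e4
  have m12 : ({1,2} : Finset ℤ) ∈ Pi6 := by decide
  have m13 : ({1,3} : Finset ℤ) ∈ Pi6 := by decide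
  have m14 : ({1,4} : Finset ℤ) ∈ Pi6 := by decide
  have m23 : ({2,3} : Finset ℤ) ∈ Pi6 := by decide
  have m24 : ({2,4} : Finset ℤ) ∈ Pi6 := by decide
  have m34 : ({3,4} : Finset ℤ) ∈ Pi6 := by decide
  by_cases h12 : planeCount E {1,2} = 1
  · by_cases h13 : planeCount E {1,3} = 1
    · by_cases h14 : planeCount E {1,4} = 1
      · omega
      · have a23 := (hpair _ m14 _ m23 (by decide)).resolve_left h14
        have a24 := (hpair _ m14 _ m24 (by decide)).resolve_left h14
        omega
    · have a14 := (hpair _ m13 _ m14 (by decide)).resolve_left h13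
      have a24 := (hpair _ m13 _ m24 (by decide)).resolve_left h13
      have a34 := (hpair _ m13 _ m34 (by decide)).resolve_left h13
      omega
  · have a13 := (hpair _ m12 _ m13 (by decide)).resolve_left h12
    have a23 := (hpair _ m12 _ m23 (by decide)).resolve_left h12
    have a34 := (hpair _ m12 _ m34 (by decide)).resolve_left h12
    omega
end
end

section
/- For every squared-star E and every plane P, at most 4 faces of E lie in P; and if exactly 4 faces of E lie in P, then E consists precisely of those 4 faces, namely E = {{a,b},{a,-b},{-a,b},{-a,-b}} for some a,b ∈ V with |a| ≠ |b| and P = {|a|,|b|} (so the signature of E is {4}). -/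
open scoped Classical
noncomputable section

lemma card_two_mem {α : Type*} [DecidableEq α] {s : Finset α} {x y : α}
    (h : s.card = 2) (hx : x ∈ s) (hy : y ∈ s) (hxy : x ≠ y) : s = {x, y} := by
  have hsub : ({x, y} : Finset α) ⊆ s := by
    intro z hz
    rcases Finset.mem_insert.mp hz with rfl | hz
    · exact hx
    · exact (Finset.mem_singleton.mp hz) ▸ hy
  exact (Finset.eq_of_subset_of_card_le hsub (by rw [h, Finset.card_pair hxy])).symm

lemma two_edges {E : Finset (Finset ℤ)}
    (hdeg : ∀ v : ℤ, (∃ e ∈ E, v ∈ e) → (E.filter fun e => v ∈ e).card = 2)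
    {v : ℤ} {f1 f2 e : Finset ℤ} (h1 : f1 ∈ E) (h2 : f2 ∈ E) (hne : f1 ≠ f2)
    (hv1 : v ∈ f1) (hv2 : v ∈ f2) (he : e ∈ E) (hve : v ∈ e) :
    e = f1 ∨ e = f2 := by
  have hc := hdeg v ⟨f1, h1, hv1⟩
  have heq := card_two_mem hc (Finset.mem_filter.mpr ⟨h1, hv1⟩)
    (Finset.mem_filter.mpr ⟨h2, hv2⟩) hne
  have hm : e ∈ ({f1, f2} : Finset (Finset ℤ)) :=
    heq ▸ Finset.mem_filter.mpr ⟨he, hve⟩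
  simpa using hm

lemma mem_square {f : Finset ℤ} {a b : ℤ} (ha : 0 < a) (hb : 0 < b)
    (hf : IsFace f) (hp : planeOf f = ({a, b} : Finset ℤ)) :
    f = {a, b} ∨ f = {a, -b} ∨ f = {-a, b} ∨ f = {-a, -b} := by
  obtain ⟨u, hu, v, hv, huv, rfl⟩ := hf
  have hpl : planeOf ({u, v} : Finset ℤ) = ({|u|, |v|} : Finset ℤ) := by
    simp [planeOf]
  rw [hpl] at hp
  have h1 : |u| = a ∨ |u| = b := by
    have hm : |u| ∈ ({a, b} : Finset ℤ) := hp ▸ (by simp)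
    simpa using hm
  have h2 : |v| = a ∨ |v| = b := by
    have hm : |v| ∈ ({a, b} : Finset ℤ) := hp ▸ (by simp)
    simpa using hm
  rcases h1 with h1 | h1 <;> rcases h2 with h2 | h2
  · exact absurd (h1.trans h2.symm) huv
  · rcases (abs_eq ha.le).mp h1 with rfl | rfl <;>
      rcases (abs_eq hb.le).mp h2 with rfl | rfl <;> tauto
  · rcases (abs_eq hb.le).mp h1 with rfl | rfl <;>
      rcases (abs_eq ha.le).mp h2 with rfl | rfl <;>
      rw [Finset.pair_comm] <;> tauto
  · exact absurd (h1.trans h2.symm) huv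

lemma sq_card_le (a b : ℤ) :
    (({({a, b} : Finset ℤ), {a, -b}, {-a, b}, {-a, -b}}) :
      Finset (Finset ℤ)).card ≤ 4 := by
  refine le_trans (Finset.card_insert_le _ _) (Nat.succ_le_succ ?_)
  refine le_trans (Finset.card_insert_le _ _) (Nat.succ_le_succ ?_)
  refine le_trans (Finset.card_insert_le _ _) (Nat.succ_le_succ ?_)
  simp

lemma filter_sub (E : Finset (Finset ℤ)) (hface : ∀ e ∈ E, IsFace e)
    {a b : ℤ} (ha : 0 < a) (hb : 0 < b) :
    (E.filter fun e => planeOf e = ({a, b} : Finset ℤ)) ⊆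
      ({({a, b} : Finset ℤ), {a, -b}, {-a, b}, {-a, -b}} : Finset (Finset ℤ)) := by
  intro f hf
  rw [Finset.mem_filter] at hf
  have h := mem_square ha hb (hface f hf.1) hf.2
  simpa using h

lemma main_aux (E : Finset (Finset ℤ)) (hface : ∀ e ∈ E, IsFace e)
    (hdeg : ∀ v : ℤ, (∃ e ∈ E, v ∈ e) → (E.filter fun e => v ∈ e).card = 2)
    (hconn : ∀ e ∈ E, ∀ f ∈ E,
      Relation.ReflTransGen (fun a b => a ∈ E ∧ b ∈ E ∧ (a ∩ b).Nonempty) e f)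
    {a b : ℤ} (ha : 0 < a) (hb : 0 < b) (hab : a ≠ b)
    (h4 : (E.filter fun e => planeOf e = ({a, b} : Finset ℤ)).card = 4) :
    E = ({({a, b} : Finset ℤ), {a, -b}, {-a, b}, {-a, -b}} : Finset (Finset ℤ)) := by
  have hsub := filter_sub E hface ha hb
  have heqf : (E.filter fun e => planeOf e = ({a, b} : Finset ℤ)) =
      ({({a, b} : Finset ℤ), {a, -b}, {-a, b}, {-a, -b}} : Finset (Finset ℤ)) :=
    Finset.eq_of_subset_of_card_le hsub (le_trans (sq_card_le a b) (le_of_eq h4.symm))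
  have m1 : ({a, b} : Finset ℤ) ∈ E := by
    have : ({a, b} : Finset ℤ) ∈ E.filter fun e => planeOf e = ({a, b} : Finset ℤ) := by
      rw [heqf]; simp
    exact (Finset.mem_filter.mp this).1
  have m2 : ({a, -b} : Finset ℤ) ∈ E := by
    have : ({a, -b} : Finset ℤ) ∈ E.filter fun e => planeOf e = ({a, b} : Finset ℤ) := by
      rw [heqf]; simp
    exact (Finset.mem_filter.mp this).1
  have m3 : ({-a, b} : Finset ℤ) ∈ E := by
    have : ({-a, b} : Finset ℤ) ∈ E.filter fun e => planeOf e = ({a, b} : Finset ℤ) := by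
      rw [heqf]; simp
    exact (Finset.mem_filter.mp this).1
  have m4 : ({-a, -b} : Finset ℤ) ∈ E := by
    have : ({-a, -b} : Finset ℤ) ∈ E.filter fun e => planeOf e = ({a, b} : Finset ℤ) := by
      rw [heqf]; simp
    exact (Finset.mem_filter.mp this).1
  have d12 : ({a, b} : Finset ℤ) ≠ {a, -b} := by
    intro h
    have hm : b ∈ ({a, -b} : Finset ℤ) := h ▸ (by simp)
    simp at hm; omega
  have d13 : ({a, b} : Finset ℤ) ≠ {-a, b} := by
    intro h
    have hm : a ∈ ({-a, b} : Finset ℤ) := h ▸ (by simp)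
    simp at hm; omega
  have d24 : ({a, -b} : Finset ℤ) ≠ {-a, -b} := by
    intro h
    have hm : a ∈ ({-a, -b} : Finset ℤ) := h ▸ (by simp)
    simp at hm; omega
  have d34 : ({-a, b} : Finset ℤ) ≠ {-a, -b} := by
    intro h
    have hm : b ∈ ({-a, -b} : Finset ℤ) := h ▸ (by simp)
    simp at hm; omega
  have key : ∀ f ∈ E, ∀ x ∈ f, (x = a ∨ x = -a ∨ x = b ∨ x = -b) →
      f ∈ ({({a, b} : Finset ℤ), {a, -b}, {-a, b}, {-a, -b}} : Finset (Finset ℤ)) := by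
    intro f hf x hx hc
    rcases hc with rfl | rfl | rfl | rfl
    · rcases two_edges hdeg m1 m2 d12 (by simp) (by simp) hf hx with rfl | rfl <;> simp
    · rcases two_edges hdeg m3 m4 d34 (by simp) (by simp) hf hx with rfl | rfl <;> simp
    · rcases two_edges hdeg m1 m3 d13 (by simp) (by simp) hf hx with rfl | rfl <;> simp
    · rcases two_edges hdeg m2 m4 d24 (by simp) (by simp) hf hx with rfl | rfl <;> simp
  apply Finset.Subset.antisymm
  · intro f hf
    have hchain := hconn f hf ({a, b} : Finset ℤ) m1
    clear hf
    induction hchain using Relation.ReflTransGen.head_induction_on with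
    | refl => simp
    | head hxc hh ih =>
      rename_i x c
      obtain ⟨hxE, hcE, w, hw⟩ := hxc
      rw [Finset.mem_inter] at hw
      have hwvals : w = a ∨ w = -a ∨ w = b ∨ w = -b := by
        have hc4 : c = ({a, b} : Finset ℤ) ∨ c = ({a, -b} : Finset ℤ) ∨
            c = ({-a, b} : Finset ℤ) ∨ c = ({-a, -b} : Finset ℤ) := by simpa using ih
        rcases hc4 with rfl | rfl | rfl | rfl <;>
          · have hw2 := hw.2; simp at hw2; tauto
      exact key _ hxE w hw.1 hwvals
  · intro f hf
    have : f ∈ E.filter fun e => planeOf e = ({a, b} : Finset ℤ) := heqf ▸ hf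
    exact (Finset.mem_filter.mp this).1

/-- At most 4 faces of a squared-star lie in one plane, and if exactly 4 do,
the squared-star is a "square" `{{a,b},{a,-b},{-a,b},{-a,-b}}` in that plane. -/
theorem at_most_four_in_a_plane (E : Finset (Finset ℤ)) (hE : SquaredStar E)
    (P : Finset ℤ) :
    planeCount E P ≤ 4 ∧
    (planeCount E P = 4 →
      ∃ a ∈ Vset, ∃ b ∈ Vset, |a| ≠ |b| ∧
        E = ({({a, b} : Finset ℤ), {a, -b}, {-a, b}, {-a, -b}} :
          Finset (Finset ℤ)) ∧
        P = {|a|, |b|}) := by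
  obtain ⟨hcard3, hface, hdeg, hconn⟩ := hE
  by_cases hne : (E.filter fun e => planeOf e = P).Nonempty
  · obtain ⟨e₀, he₀⟩ := hne
    rw [Finset.mem_filter] at he₀
    obtain ⟨he₀E, he₀P⟩ := he₀
    obtain ⟨u, hu, v, hv, huv, he⟩ := hface e₀ he₀E
    have hu0 : u ≠ 0 := by rintro rfl; norm_num [Vset] at hu
    have hv0 : v ≠ 0 := by rintro rfl; norm_num [Vset] at hv
    have ha : 0 < |u| := abs_pos.mpr hu0
    have hb : 0 < |v| := abs_pos.mpr hv0
    have hP : P = ({|u|, |v|} : Finset ℤ) := by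
      rw [he] at he₀P
      rw [← he₀P]
      simp [planeOf]
    have haV : |u| ∈ Vset := by
      simp only [Vset, Finset.mem_insert, Finset.mem_singleton] at hu ⊢
      rcases hu with rfl | rfl | rfl | rfl | rfl | rfl | rfl | rfl <;> norm_num
    have hbV : |v| ∈ Vset := by
      simp only [Vset, Finset.mem_insert, Finset.mem_singleton] at hv ⊢
      rcases hv with rfl | rfl | rfl | rfl | rfl | rfl | rfl | rfl <;> norm_num
    constructor
    · rw [planeCount, hP]
      exact le_trans (Finset.card_le_card (filter_sub E hface ha hb)) (sq_card_le _ _)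
    · intro h4
      rw [planeCount, hP] at h4
      refine ⟨|u|, haV, |v|, hbV, ?_, ?_, ?_⟩
      · simpa [abs_abs] using huv
      · exact main_aux E hface hdeg hconn ha hb huv h4
      · rw [hP, abs_abs, abs_abs]
  · rw [Finset.not_nonempty_iff_eq_empty] at hne
    constructor
    · rw [planeCount, hne]; simp
    · intro h4
      rw [planeCount, hne] at h4
      simp at h4
end
end

section
/- Every squared-star with exactly 4 faces has signature {4}, {2,2}, or {1,1,1,1}, and each of these three signatures is realized by some squared-star with exactly 4 faces. -/
open scoped Classical
noncomputable section

/-! ### Auxiliary lemmas -/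

set_option maxRecDepth 100000 in
lemma sig4_aux : ∀ a ∈ Vset, ∀ b ∈ Vset, ∀ c ∈ Vset, ∀ d ∈ Vset,
    |a| ≠ |b| → |b| ≠ |c| → |c| ≠ |d| → |d| ≠ |a| → a ≠ c → b ≠ d →
    (signatureOf {({a,b}:Finset ℤ), {b,c}, {c,d}, {d,a}} = {4} ∨
     signatureOf {({a,b}:Finset ℤ), {b,c}, {c,d}, {d,a}} = {2,2} ∨
     signatureOf {({a,b}:Finset ℤ), {b,c}, {c,d}, {d,a}} = {1,1,1,1}) := by decide

lemma deg2_aux {E : Finset (Finset ℤ)}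
    (hdeg : ∀ v : ℤ, (∃ e ∈ E, v ∈ e) → (E.filter fun e => v ∈ e).card = 2)
    {e : Finset ℤ} {v : ℤ} (he : e ∈ E) (hv : v ∈ e) :
    ∃ f ∈ E, f ≠ e ∧ v ∈ f ∧ ∀ g ∈ E, v ∈ g → g = e ∨ g = f := by
  obtain ⟨x, y, hxy, hset⟩ := Finset.card_eq_two.mp (hdeg v ⟨e, he, hv⟩)
  have hmem : ∀ g, (g ∈ E ∧ v ∈ g) ↔ (g = x ∨ g = y) := by
    intro g
    constructor
    · intro hg
      have : g ∈ E.filter fun e => v ∈ e := Finset.mem_filter.mpr hg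
      rw [hset] at this; simpa using this
    · intro hg
      have : g ∈ E.filter fun e => v ∈ e := by rw [hset]; simpa using hg
      exact Finset.mem_filter.mp this
  rcases (hmem e).mp ⟨he, hv⟩ with rfl | rfl
  · obtain ⟨hyE, hvy⟩ := (hmem y).mpr (Or.inr rfl)
    exact ⟨y, hyE, hxy.symm, hvy, fun g hg hvg => (hmem g).mp ⟨hg, hvg⟩⟩
  · obtain ⟨hxE, hvx⟩ := (hmem x).mpr (Or.inl rfl)
    exact ⟨x, hxE, hxy, hvx, fun g hg hvg => ((hmem g).mp ⟨hg, hvg⟩).symm⟩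

lemma face_shape_aux {E : Finset (Finset ℤ)} (hfaces : ∀ e ∈ E, IsFace e)
    {e : Finset ℤ} {v : ℤ} (he : e ∈ E) (hv : v ∈ e) :
    ∃ w, w ∈ Vset ∧ v ∈ Vset ∧ |v| ≠ |w| ∧ e = {v, w} := by
  obtain ⟨u, hu, w, hw, huw, rfl⟩ := hfaces e he
  simp only [Finset.mem_insert, Finset.mem_singleton] at hv
  rcases hv with rfl | rfl
  · exact ⟨w, hw, hu, huw, rfl⟩
  · exact ⟨u, hu, hw, fun h => huw h.symm, Finset.pair_comm u v⟩

lemma pair_ne_aux {s t : Finset ℤ} {v : ℤ} (hv : v ∈ t) (hvs : v ∉ s) : s ≠ t :=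
  fun h => hvs (h ▸ hv)

set_option maxHeartbeats 2000000 in
/-- Structural extraction: a squared-star with 4 faces is a 4-cycle. -/
lemma extract_cycle {E : Finset (Finset ℤ)} (hSS : SquaredStar E) (h4 : E.card = 4) :
    ∃ a b c d : ℤ, a ∈ Vset ∧ b ∈ Vset ∧ c ∈ Vset ∧ d ∈ Vset ∧
      |a| ≠ |b| ∧ |b| ≠ |c| ∧ |c| ≠ |d| ∧ |d| ≠ |a| ∧ a ≠ c ∧ b ≠ d ∧
      E = {({a,b}:Finset ℤ), {b,c}, {c,d}, {d,a}} := by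
  obtain ⟨-, hfaces, hdeg, -⟩ := hSS
  have hne : E.Nonempty := by rw [← Finset.card_pos, h4]; norm_num
  obtain ⟨e0, he0⟩ := hne
  obtain ⟨a, ha, b, hb, hab, rfl⟩ := hfaces e0 he0
  have hba : b ≠ a := fun h => hab (by rw [h])
  -- second edge at b
  have hbmem : b ∈ ({a, b} : Finset ℤ) := by simp
  obtain ⟨e2, he2, hne2, hb2, uniq_b⟩ := deg2_aux hdeg he0 hbmem
  obtain ⟨c, hc, -, hbc, rfl⟩ := face_shape_aux hfaces he2 hb2
  have hcb : c ≠ b := fun h => hbc (by rw [h])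
  have hca : c ≠ a := by
    rintro rfl
    exact hne2 (Finset.pair_comm b c)
  -- second edge at c
  have hcmem : c ∈ ({b, c} : Finset ℤ) := by simp
  obtain ⟨e3, he3, hne3, hc3, uniq_c⟩ := deg2_aux hdeg he2 hcmem
  obtain ⟨d, hd, -, hcd, rfl⟩ := face_shape_aux hfaces he3 hc3
  have hdc : d ≠ c := fun h => hcd (by rw [h])
  have he3ne0 : ({c, d} : Finset ℤ) ≠ {a, b} := by
    refine fun h => ?_
    have : c ∈ ({a, b} : Finset ℤ) := h ▸ (by simp : c ∈ ({c, d} : Finset ℤ))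
    simp only [Finset.mem_insert, Finset.mem_singleton] at this
    rcases this with h' | h'
    · exact hca h'
    · exact hcb h'
  have hbd : b ≠ d := by
    rintro rfl
    have hmem : b ∈ ({c, b} : Finset ℤ) := by simp
    rcases uniq_b _ he3 hmem with h | h
    · exact he3ne0 h
    · exact hne3 h
  -- second edge at a (other than e0)
  have hamem : a ∈ ({a, b} : Finset ℤ) := by simp
  obtain ⟨e1, he1, hne1, ha1, uniq_a⟩ := deg2_aux hdeg he0 hamem
  have had : a ≠ d := by
    rintro rfl
    -- triangle case: derive a contradiction via a fourth edge
    have he3e1 : ({c, a} : Finset ℤ) = e1 := by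
      rcases uniq_a _ he3 (by simp) with h | h
      · exact absurd h he3ne0
      · exact h
    have hS : ¬ E ⊆ ({({a,b}:Finset ℤ), {b,c}, {c,a}} : Finset (Finset ℤ)) := by
      intro hsub
      have h1 := Finset.card_le_card hsub
      have h2 := Finset.card_insert_le ({a,b}:Finset ℤ)
        ({({b,c}:Finset ℤ), {c,a}} : Finset (Finset ℤ))
      have h3 := Finset.card_insert_le ({b,c}:Finset ℤ)
        ({({c,a}:Finset ℤ)} : Finset (Finset ℤ))
      simp only [Finset.card_singleton] at h3
      omega
    obtain ⟨f, hf, hfS⟩ := Finset.not_subset.mp hS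
    simp only [Finset.mem_insert, Finset.mem_singleton, not_or] at hfS
    obtain ⟨hf0, hf2, hf3⟩ := hfS
    obtain ⟨u, hu, w, hw, huw, rfl⟩ := hfaces f hf
    have humem : u ∈ ({u, w} : Finset ℤ) := by simp
    obtain ⟨g, hg, hgne, hug, -⟩ := deg2_aux hdeg hf humem
    -- E = {e0, e2, e3, f}
    have hsub : ({({a,b}:Finset ℤ), {b,c}, {c,a}, {u,w}} : Finset (Finset ℤ)) ⊆ E := by
      intro x hx
      simp only [Finset.mem_insert, Finset.mem_singleton] at hx
      rcases hx with rfl | rfl | rfl | rfl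
      · exact he0
      · exact he2
      · exact he3
      · exact hf
    have hcard4 : ({({a,b}:Finset ℤ), {b,c}, {c,a}, {u,w}} : Finset (Finset ℤ)).card = 4 := by
      rw [Finset.card_insert_of_notMem, Finset.card_insert_of_notMem,
        Finset.card_insert_of_notMem, Finset.card_singleton]
      · simp only [Finset.mem_singleton]
        exact fun h => hf3 h.symm
      · simp only [Finset.mem_insert, Finset.mem_singleton, not_or]
        exact ⟨hne3.symm, fun h => hf2 h.symm⟩
      · simp only [Finset.mem_insert, Finset.mem_singleton, not_or]
        exact ⟨hne2.symm, fun h => he3ne0 h.symm, fun h => hf0 h.symm⟩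
    have hEeq : ({({a,b}:Finset ℤ), {b,c}, {c,a}, {u,w}} : Finset (Finset ℤ)) = E :=
      Finset.eq_of_subset_of_card_le hsub (by omega)
    -- the other edge g at u lies in the triangle, so u ∈ {a, b, c}
    have hgmem : g = ({a,b}:Finset ℤ) ∨ g = {b,c} ∨ g = {c,a} := by
      have : g ∈ ({({a,b}:Finset ℤ), {b,c}, {c,a}, {u,w}} : Finset (Finset ℤ)) := hEeq ▸ hg
      simp only [Finset.mem_insert, Finset.mem_singleton] at this
      rcases this with h | h | h | h
      · exact Or.inl h
      · exact Or.inr (Or.inl h)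
      · exact Or.inr (Or.inr h)
      · exact absurd h hgne
    have huabc : u = a ∨ u = b ∨ u = c := by
      rcases hgmem with rfl | rfl | rfl <;>
        · simp only [Finset.mem_insert, Finset.mem_singleton] at hug
          tauto
    rcases huabc with rfl | rfl | rfl
    · rcases uniq_a _ hf humem with h | h
      · exact hf0 h
      · exact hf3 (h.trans he3e1.symm)
    · rcases uniq_b _ hf humem with h | h
      · exact hf0 h
      · exact hf2 h
    · rcases uniq_c _ hf humem with h | h
      · exact hf2 h
      · exact hf3 h
  -- second edge at d
  have hdmem : d ∈ ({c, d} : Finset ℤ) := by simp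
  obtain ⟨e4, he4, hne4, hd4, -⟩ := deg2_aux hdeg he3 hdmem
  obtain ⟨x, hx, -, hdx, rfl⟩ := face_shape_aux hfaces he4 hd4
  have hd_nab : d ∉ ({a, b} : Finset ℤ) := by
    simp only [Finset.mem_insert, Finset.mem_singleton, not_or]
    exact ⟨fun h => had h.symm, fun h => hbd h.symm⟩
  have hd_nbc : d ∉ ({b, c} : Finset ℤ) := by
    simp only [Finset.mem_insert, Finset.mem_singleton, not_or]
    exact ⟨fun h => hbd h.symm, hdc⟩
  have n04 : ({a,b} : Finset ℤ) ≠ {d,x} := pair_ne_aux (by simp) hd_nab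
  have n24 : ({b,c} : Finset ℤ) ≠ {d,x} := pair_ne_aux (by simp) hd_nbc
  have hc_nab : c ∉ ({a, b} : Finset ℤ) := by
    simp only [Finset.mem_insert, Finset.mem_singleton, not_or]
    exact ⟨hca, hcb⟩
  have n03 : ({a,b} : Finset ℤ) ≠ {c,d} := pair_ne_aux (by simp) hc_nab
  have hcard4 : ({({a,b}:Finset ℤ), {b,c}, {c,d}, {d,x}} : Finset (Finset ℤ)).card = 4 := by
    rw [Finset.card_insert_of_notMem, Finset.card_insert_of_notMem,
      Finset.card_insert_of_notMem, Finset.card_singleton]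
    · simp only [Finset.mem_singleton]
      exact hne4.symm
    · simp only [Finset.mem_insert, Finset.mem_singleton, not_or]
      exact ⟨hne3.symm, n24⟩
    · simp only [Finset.mem_insert, Finset.mem_singleton, not_or]
      exact ⟨hne2.symm, n03, n04⟩
  have hsub : ({({a,b}:Finset ℤ), {b,c}, {c,d}, {d,x}} : Finset (Finset ℤ)) ⊆ E := by
    intro y hy
    simp only [Finset.mem_insert, Finset.mem_singleton] at hy
    rcases hy with rfl | rfl | rfl | rfl
    · exact he0
    · exact he2
    · exact he3
    · exact he4
  have hEeq : ({({a,b}:Finset ℤ), {b,c}, {c,d}, {d,x}} : Finset (Finset ℤ)) = E :=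
    Finset.eq_of_subset_of_card_le hsub (by omega)
  -- identify x = a using the second edge at a
  have ha_ne3 : a ∉ ({c, d} : Finset ℤ) := by
    simp only [Finset.mem_insert, Finset.mem_singleton, not_or]
    exact ⟨fun h => hca h.symm, had⟩
  have ha_ne2 : a ∉ ({b, c} : Finset ℤ) := by
    simp only [Finset.mem_insert, Finset.mem_singleton, not_or]
    exact ⟨fun h => hba h.symm, fun h => hca h.symm⟩
  have he1mem : e1 ∈ ({({a,b}:Finset ℤ), {b,c}, {c,d}, {d,x}} : Finset (Finset ℤ)) :=
    hEeq ▸ he1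
  simp only [Finset.mem_insert, Finset.mem_singleton] at he1mem
  have he1eq : e1 = ({d, x} : Finset ℤ) := by
    rcases he1mem with rfl | rfl | rfl | rfl
    · exact absurd rfl hne1
    · exact absurd ha1 ha_ne2
    · exact absurd ha1 ha_ne3
    · rfl
  have hax : a = x := by
    rw [he1eq] at ha1
    simp only [Finset.mem_insert, Finset.mem_singleton] at ha1
    rcases ha1 with h | h
    · exact absurd h had
    · exact h
  subst hax
  exact ⟨a, b, c, d, ha, hb, hc, hd, hab, hbc, hcd,
    fun h => hdx h, hca.symm, hbd, hEeq.symm⟩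

lemma conn4_aux {E : Finset (Finset ℤ)} {p q r s : Finset ℤ}
    (hE : E = {p, q, r, s})
    (h1 : (p ∩ q).Nonempty) (h2 : (q ∩ r).Nonempty)
    (h3 : (r ∩ s).Nonempty) (h4 : (s ∩ p).Nonempty) :
    ∀ e ∈ E, ∀ f ∈ E,
      Relation.ReflTransGen (fun a b => a ∈ E ∧ b ∈ E ∧ (a ∩ b).Nonempty) e f := by
  set R := fun a b => a ∈ E ∧ b ∈ E ∧ (a ∩ b).Nonempty with hR
  have hp : p ∈ E := by rw [hE]; simp
  have hq : q ∈ E := by rw [hE]; simp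
  have hr : r ∈ E := by rw [hE]; simp
  have hs : s ∈ E := by rw [hE]; simp
  have hsym : Symmetric R := fun a b h => ⟨h.2.1, h.1, by rw [Finset.inter_comm]; exact h.2.2⟩
  have rpq : R p q := ⟨hp, hq, h1⟩
  have rqr : R q r := ⟨hq, hr, h2⟩
  have rrs : R r s := ⟨hr, hs, h3⟩
  have rsp : R s p := ⟨hs, hp, h4⟩
  have reach : ∀ x ∈ E, Relation.ReflTransGen R p x := by
    intro x hx
    rw [hE] at hx
    simp only [Finset.mem_insert, Finset.mem_singleton] at hx
    rcases hx with rfl | rfl | rfl | rfl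
    · exact Relation.ReflTransGen.refl
    · exact Relation.ReflTransGen.single rpq
    · exact (Relation.ReflTransGen.single rpq).tail rqr
    · exact Relation.ReflTransGen.single (hsym rsp)
  intro e he f hf
  exact ((@Relation.ReflTransGen.symmetric _ R ⟨hsym⟩).symm _ _ (reach e he)).trans (reach f hf)

lemma isFace_mk (u v : ℤ) (hu : u ∈ Vset) (hv : v ∈ Vset) (h : |u| ≠ |v|) :
    IsFace {u, v} := ⟨u, hu, v, hv, h, rfl⟩

/-- A squared-star with exactly 4 faces has signature `{4}`, `{2,2}` or
`{1,1,1,1}`, and each of these signatures is realized. -/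
theorem signature_four_faces :
    (∀ E : Finset (Finset ℤ), SquaredStar E → E.card = 4 →
      signatureOf E = {4} ∨ signatureOf E = {2, 2} ∨
        signatureOf E = {1, 1, 1, 1}) ∧
    (∃ E : Finset (Finset ℤ), SquaredStar E ∧ E.card = 4 ∧
      signatureOf E = {4}) ∧
    (∃ E : Finset (Finset ℤ), SquaredStar E ∧ E.card = 4 ∧
      signatureOf E = {2, 2}) ∧
    (∃ E : Finset (Finset ℤ), SquaredStar E ∧ E.card = 4 ∧
      signatureOf E = {1, 1, 1, 1}) := by
  refine ⟨?_, ?_, ?_, ?_⟩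
  · intro E hSS h4
    obtain ⟨a, b, c, d, ha, hb, hc, hd, hab, hbc, hcd, hda, hac, hbd, hE⟩ :=
      extract_cycle hSS h4
    rw [hE]
    exact sig4_aux a ha b hb c hc d hd hab hbc hcd hda hac hbd
  · refine ⟨{({1,2}:Finset ℤ), {2,-1}, {-1,-2}, {-2,1}}, ⟨?_, ?_, ?_, ?_⟩, by decide, by decide⟩
    · decide
    · intro e he
      simp only [Finset.mem_insert, Finset.mem_singleton] at he
      rcases he with rfl | rfl | rfl | rfl
      · exact isFace_mk 1 2 (by decide) (by decide) (by decide)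
      · exact isFace_mk 2 (-1) (by decide) (by decide) (by decide)
      · exact isFace_mk (-1) (-2) (by decide) (by decide) (by decide)
      · exact isFace_mk (-2) 1 (by decide) (by decide) (by decide)
    · rintro v ⟨e, he, hve⟩
      simp only [Finset.mem_insert, Finset.mem_singleton] at he
      rcases he with rfl | rfl | rfl | rfl <;>
        · simp only [Finset.mem_insert, Finset.mem_singleton] at hve
          rcases hve with rfl | rfl <;> decide
    · exact conn4_aux rfl (by decide) (by decide) (by decide) (by decide)
  · refine ⟨{({1,2}:Finset ℤ), {2,-1}, {-1,3}, {3,1}}, ⟨?_, ?_, ?_, ?_⟩, by decide, by decide⟩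
    · decide
    · intro e he
      simp only [Finset.mem_insert, Finset.mem_singleton] at he
      rcases he with rfl | rfl | rfl | rfl
      · exact isFace_mk 1 2 (by decide) (by decide) (by decide)
      · exact isFace_mk 2 (-1) (by decide) (by decide) (by decide)
      · exact isFace_mk (-1) 3 (by decide) (by decide) (by decide)
      · exact isFace_mk 3 1 (by decide) (by decide) (by decide)
    · rintro v ⟨e, he, hve⟩
      simp only [Finset.mem_insert, Finset.mem_singleton] at he
      rcases he with rfl | rfl | rfl | rfl <;>
        · simp only [Finset.mem_insert, Finset.mem_singleton] at hve
          rcases hve with rfl | rfl <;> decide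
    · exact conn4_aux rfl (by decide) (by decide) (by decide) (by decide)
  · refine ⟨{({1,2}:Finset ℤ), {2,3}, {3,4}, {4,1}}, ⟨?_, ?_, ?_, ?_⟩, by decide, by decide⟩
    · decide
    · intro e he
      simp only [Finset.mem_insert, Finset.mem_singleton] at he
      rcases he with rfl | rfl | rfl | rfl
      · exact isFace_mk 1 2 (by decide) (by decide) (by decide)
      · exact isFace_mk 2 3 (by decide) (by decide) (by decide)
      · exact isFace_mk 3 4 (by decide) (by decide) (by decide)
      · exact isFace_mk 4 1 (by decide) (by decide) (by decide)
    · rintro v ⟨e, he, hve⟩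
      simp only [Finset.mem_insert, Finset.mem_singleton] at he
      rcases he with rfl | rfl | rfl | rfl <;>
        · simp only [Finset.mem_insert, Finset.mem_singleton] at hve
          rcases hve with rfl | rfl <;> decide
    · exact conn4_aux rfl (by decide) (by decide) (by decide) (by decide)
end
end

section
/- Every squared-star with exactly 5 faces has signature {3,1,1} or {2,1,1,1}, and each of these two signatures is realized by some squared-star with exactly 5 faces. -/
open scoped Classical
noncomputable section

/-! ### Auxiliary material -/

/-- All 24 faces of `G₈`. -/
def allFaces : Finset (Finset ℤ) :=
  ((Vset ×ˢ Vset).filter fun p => |p.1| ≠ |p.2|).image fun p => {p.1, p.2}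

/-- The degree condition, restricted to `Vset`, in decidable form. -/
def degOK (E : Finset (Finset ℤ)) : Prop :=
  ∀ v ∈ Vset, (E.filter fun e => v ∈ e).card = 0 ∨ (E.filter fun e => v ∈ e).card = 2

instance : DecidablePred degOK := fun _ => by unfold degOK; infer_instance

lemma isFace_mem_allFaces {e : Finset ℤ} (h : IsFace e) : e ∈ allFaces := by
  obtain ⟨u, hu, v, hv, hne, rfl⟩ := h
  exact Finset.mem_image.mpr ⟨(u, v),
    Finset.mem_filter.mpr ⟨Finset.mem_product.mpr ⟨hu, hv⟩, hne⟩, rfl⟩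

lemma isFace_subset_Vset {e : Finset ℤ} (h : IsFace e) : e ⊆ Vset := by
  obtain ⟨u, hu, v, hv, hne, rfl⟩ := h
  intro x hx
  rcases Finset.mem_insert.mp hx with rfl | hx
  · exact hu
  · rcases Finset.mem_singleton.mp hx with rfl
    exact hv

lemma isFace_card {e : Finset ℤ} (h : IsFace e) : e.card = 2 := by
  obtain ⟨u, hu, v, hv, hne, rfl⟩ := h
  exact Finset.card_pair (fun huv => hne (by rw [huv]))

set_option maxRecDepth 40000 in
set_option maxHeartbeats 4000000 in
lemma key : ∀ S ∈ Finset.powersetCard 5 Vset,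
    ∀ E ∈ Finset.powersetCard 5 (allFaces.filter fun e => e ⊆ S), degOK E →
      (signatureOf E = {3, 1, 1} ∨ signatureOf E = {2, 1, 1, 1}) := by decide

/-- A squared-star with exactly 5 faces has signature `{3,1,1}` or `{2,1,1,1}`,
and each of these signatures is realized. -/
theorem signature_five_faces :
    (∀ E : Finset (Finset ℤ), SquaredStar E → E.card = 5 →
      signatureOf E = {3, 1, 1} ∨ signatureOf E = {2, 1, 1, 1}) ∧
    (∃ E : Finset (Finset ℤ), SquaredStar E ∧ E.card = 5 ∧
      signatureOf E = {3, 1, 1}) ∧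
    (∃ E : Finset (Finset ℤ), SquaredStar E ∧ E.card = 5 ∧
      signatureOf E = {2, 1, 1, 1}) := by
  refine ⟨?_, ?_, ?_⟩
  · intro E hSS hcard
    obtain ⟨-, hfaces, hdeg, -⟩ := hSS
    -- the support
    set S : Finset ℤ := Vset.filter (fun v => ∃ e ∈ E, v ∈ e) with hS
    have hsubS : ∀ e ∈ E, e ⊆ S := by
      intro e he v hv
      exact Finset.mem_filter.mpr ⟨isFace_subset_Vset (hfaces e he) hv, e, he, hv⟩
    -- double counting: the support has exactly 5 elements
    have hsum : ∑ v ∈ Vset, (E.filter fun e => v ∈ e).card = 10 := by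
      have h1 : ∀ v ∈ Vset, (E.filter fun e => v ∈ e).card
          = ∑ e ∈ E, if v ∈ e then 1 else 0 := by
        intro v _; rw [Finset.card_filter]
      calc ∑ v ∈ Vset, (E.filter fun e => v ∈ e).card
          = ∑ v ∈ Vset, ∑ e ∈ E, if v ∈ e then 1 else 0 :=
            Finset.sum_congr rfl h1
        _ = ∑ e ∈ E, ∑ v ∈ Vset, if v ∈ e then 1 else 0 := Finset.sum_comm
        _ = ∑ e ∈ E, (Vset.filter fun v => v ∈ e).card := by
            refine Finset.sum_congr rfl fun e _ => ?_
            rw [Finset.card_filter]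
        _ = ∑ e ∈ E, e.card := by
            refine Finset.sum_congr rfl fun e he => ?_
            congr 1
            rw [Finset.filter_mem_eq_inter,
              Finset.inter_eq_right.mpr (isFace_subset_Vset (hfaces e he))]
        _ = ∑ e ∈ E, 2 :=
            Finset.sum_congr rfl fun e he => isFace_card (hfaces e he)
        _ = 10 := by rw [Finset.sum_const, hcard]; rfl
    have hsum2 : ∑ v ∈ Vset, (E.filter fun e => v ∈ e).card = 2 * S.card := by
      have h2 : ∀ v ∈ Vset, (E.filter fun e => v ∈ e).card
          = if (∃ e ∈ E, v ∈ e) then 2 else 0 := by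
        intro v _
        split
        · exact hdeg v ‹_›
        · rw [Finset.card_eq_zero, Finset.filter_eq_empty_iff]
          push_neg at *
          intro e he
          exact ‹∀ e ∈ E, v ∉ e› e he
      rw [Finset.sum_congr rfl h2, ← Finset.sum_filter, Finset.sum_const,
        smul_eq_mul, mul_comm]
    have hScard : S.card = 5 := by omega
    have hSmem : S ∈ Finset.powersetCard 5 Vset :=
      Finset.mem_powersetCard.mpr ⟨Finset.filter_subset _ _, hScard⟩
    have hEmem : E ∈ Finset.powersetCard 5 (allFaces.filter fun e => e ⊆ S) := by
      refine Finset.mem_powersetCard.mpr ⟨fun e he => ?_, hcard⟩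
      exact Finset.mem_filter.mpr ⟨isFace_mem_allFaces (hfaces e he), hsubS e he⟩
    have hdegOK : degOK E := by
      intro v _
      by_cases h : ∃ e ∈ E, v ∈ e
      · exact Or.inr (hdeg v h)
      · left
        rw [Finset.card_eq_zero, Finset.filter_eq_empty_iff]
        push_neg at h
        exact h
    exact key S hSmem E hEmem hdegOK
  · -- signature {3,1,1}: the cycle 1, 2, -1, -2, 3
    refine ⟨{{1, 2}, {2, -1}, {-1, -2}, {-2, 3}, {3, 1}}, ⟨by decide, ?_, ?_, ?_⟩,
      by decide, by decide⟩
    · intro e he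
      fin_cases he
      · exact ⟨1, by decide, 2, by decide, by decide, by decide⟩
      · exact ⟨2, by decide, -1, by decide, by decide, by decide⟩
      · exact ⟨-1, by decide, -2, by decide, by decide, by decide⟩
      · exact ⟨-2, by decide, 3, by decide, by decide, by decide⟩
      · exact ⟨3, by decide, 1, by decide, by decide, by decide⟩
    · intro v hv
      obtain ⟨e, he, hve⟩ := hv
      fin_cases he <;>
        simp only [Finset.mem_insert, Finset.mem_singleton] at hve <;>
        rcases hve with rfl | rfl <;> decide
    · intro e he f hf
      have hsymm : Symmetric (fun a b : Finset ℤ =>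
          a ∈ ({{1, 2}, {2, -1}, {-1, -2}, {-2, 3}, {3, 1}} : Finset (Finset ℤ)) ∧
          b ∈ ({{1, 2}, {2, -1}, {-1, -2}, {-2, 3}, {3, 1}} : Finset (Finset ℤ)) ∧
          (a ∩ b).Nonempty) :=
        fun a b ⟨h1, h2, h3⟩ => ⟨h2, h1, by rwa [Finset.inter_comm]⟩
      have hreach : ∀ f ∈ ({{1, 2}, {2, -1}, {-1, -2}, {-2, 3}, {3, 1}} :
          Finset (Finset ℤ)), Relation.ReflTransGen (fun a b : Finset ℤ =>
          a ∈ ({{1, 2}, {2, -1}, {-1, -2}, {-2, 3}, {3, 1}} : Finset (Finset ℤ)) ∧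
          b ∈ ({{1, 2}, {2, -1}, {-1, -2}, {-2, 3}, {3, 1}} : Finset (Finset ℤ)) ∧
          (a ∩ b).Nonempty) {1, 2} f := by
        intro f hf
        fin_cases hf
        · exact .refl
        · exact .single ⟨by decide, by decide, 2, by decide⟩
        · exact Relation.ReflTransGen.tail (b := {2, -1})
            (.single ⟨by decide, by decide, 2, by decide⟩)
            ⟨by decide, by decide, -1, by decide⟩
        · exact Relation.ReflTransGen.tail (b := {-1, -2})
            (Relation.ReflTransGen.tail (b := {2, -1})
            (.single ⟨by decide, by decide, 2, by decide⟩)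
            ⟨by decide, by decide, -1, by decide⟩)
            ⟨by decide, by decide, -2, by decide⟩
        · exact .single ⟨by decide, by decide, 1, by decide⟩
      exact ((@Relation.ReflTransGen.stdSymm _ _ ⟨fun _ _ h => hsymm h⟩).symm _ _ (hreach e he)).trans (hreach f hf)
  · -- signature {2,1,1,1}: the cycle 1, 2, 3, 4, -2
    refine ⟨{{1, 2}, {2, 3}, {3, 4}, {4, -2}, {-2, 1}}, ⟨by decide, ?_, ?_, ?_⟩,
      by decide, by decide⟩
    · intro e he
      fin_cases he
      · exact ⟨1, by decide, 2, by decide, by decide, by decide⟩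
      · exact ⟨2, by decide, 3, by decide, by decide, by decide⟩
      · exact ⟨3, by decide, 4, by decide, by decide, by decide⟩
      · exact ⟨4, by decide, -2, by decide, by decide, by decide⟩
      · exact ⟨-2, by decide, 1, by decide, by decide, by decide⟩
    · intro v hv
      obtain ⟨e, he, hve⟩ := hv
      fin_cases he <;>
        simp only [Finset.mem_insert, Finset.mem_singleton] at hve <;>
        rcases hve with rfl | rfl <;> decide
    · intro e he f hf
      have hsymm : Symmetric (fun a b : Finset ℤ =>
          a ∈ ({{1, 2}, {2, 3}, {3, 4}, {4, -2}, {-2, 1}} : Finset (Finset ℤ)) ∧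
          b ∈ ({{1, 2}, {2, 3}, {3, 4}, {4, -2}, {-2, 1}} : Finset (Finset ℤ)) ∧
          (a ∩ b).Nonempty) :=
        fun a b ⟨h1, h2, h3⟩ => ⟨h2, h1, by rwa [Finset.inter_comm]⟩
      have hreach : ∀ f ∈ ({{1, 2}, {2, 3}, {3, 4}, {4, -2}, {-2, 1}} :
          Finset (Finset ℤ)), Relation.ReflTransGen (fun a b : Finset ℤ =>
          a ∈ ({{1, 2}, {2, 3}, {3, 4}, {4, -2}, {-2, 1}} : Finset (Finset ℤ)) ∧
          b ∈ ({{1, 2}, {2, 3}, {3, 4}, {4, -2}, {-2, 1}} : Finset (Finset ℤ)) ∧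
          (a ∩ b).Nonempty) {1, 2} f := by
        intro f hf
        fin_cases hf
        · exact .refl
        · exact .single ⟨by decide, by decide, 2, by decide⟩
        · exact Relation.ReflTransGen.tail (b := {2, 3})
            (.single ⟨by decide, by decide, 2, by decide⟩)
            ⟨by decide, by decide, 3, by decide⟩
        · exact Relation.ReflTransGen.tail (b := {3, 4})
            (Relation.ReflTransGen.tail (b := {2, 3})
            (.single ⟨by decide, by decide, 2, by decide⟩)
            ⟨by decide, by decide, 3, by decide⟩)
            ⟨by decide, by decide, 4, by decide⟩
        · exact .single ⟨by decide, by decide, 1, by decide⟩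
      exact ((@Relation.ReflTransGen.stdSymm _ _ ⟨fun _ _ h => hsymm h⟩).symm _ _ (hreach e he)).trans (hreach f hf)
end
end

section
/- Every squared-star with exactly 6 faces has signature {3,1,1,1}, {2,1,1,1,1}, or {2,2,2}; moreover, in the case {2,2,2} the number of doubled planes of adjacent type is 0 or 2 (never 1 or 3), and each of these possibilities is realized. -/
open scoped Classical
noncomputable section

instance instAdjDec (E : Finset (Finset ℤ)) (P : Finset ℤ) : Decidable (AdjacentType E P) :=
  inferInstanceAs (Decidable (_ ∧ ∃ e ∈ E, ∃ f ∈ E, _ ∧ _ ∧ _ ∧ _))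
def adjB (E : Finset (Finset ℤ)) : ℕ :=
  ((E.image planeOf).filter fun P => AdjacentType E P).card
lemma adj_eq (E : Finset (Finset ℤ)) : adjDoubledCount E = adjB E := by
  unfold adjDoubledCount adjB
  exact congrArg Finset.card (Finset.filter_congr_decidable _ _ _)

def ConclB (E : Finset (Finset ℤ)) : Prop :=
  (signatureOf E = {3, 1, 1, 1} ∨ signatureOf E = {2, 1, 1, 1, 1} ∨
      signatureOf E = {2, 2, 2}) ∧
    (signatureOf E = {2, 2, 2} → adjB E = 0 ∨ adjB E = 2)
instance instConclBDec (E : Finset (Finset ℤ)) : Decidable (ConclB E) :=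
  inferInstanceAs (Decidable (_ ∧ _))

def degb (E : Finset (Finset ℤ)) (v : ℤ) : ℕ := (E.filter fun e => v ∈ e).card

def Good (E : Finset (Finset ℤ)) : Prop := ∀ v ∈ Vset, degb E v = 0 ∨ degb E v = 2
instance instGoodDec (E : Finset (Finset ℤ)) : Decidable (Good E) :=
  inferInstanceAs (Decidable (∀ v ∈ Vset, _ ∨ _))

def wt : ℤ → ℕ := fun x =>
  if x = 1 then 1 else if x = -1 then 4 else if x = 2 then 16 else if x = -2 then 64
  else if x = 3 then 256 else if x = -3 then 1024 else if x = 4 then 4096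
  else if x = -4 then 16384 else 0

def stateOf (A : Finset (Finset ℤ)) : ℕ :=
  degb A 1 * 1 + degb A (-1) * 4 + degb A 2 * 16 + degb A (-2) * 64 +
  degb A 3 * 256 + degb A (-3) * 1024 + degb A 4 * 4096 + degb A (-4) * 16384

lemma degb_mono {U E : Finset (Finset ℤ)} (h : U ⊆ E) (v : ℤ) : degb U v ≤ degb E v :=
  Finset.card_le_card (Finset.filter_subset_filter _ h)

lemma degb_insert {A : Finset (Finset ℤ)} {e : Finset ℤ} (he : e ∉ A) (w : ℤ) :
    degb (insert e A) w = degb A w + if w ∈ e then 1 else 0 := by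
  unfold degb
  rw [Finset.filter_insert]
  by_cases hw : w ∈ e
  · rw [if_pos hw, Finset.card_insert_of_notMem (fun h => he (Finset.mem_of_mem_filter _ h)),
      if_pos hw]
  · rw [if_neg hw, if_neg hw, add_zero]

lemma degb_union_eq {B A : Finset (Finset ℤ)} {v : ℤ} (h : ∀ e ∈ B, v ∉ e) :
    degb (B ∪ A) v = degb A v := by
  unfold degb
  rw [Finset.filter_union, Finset.filter_false_of_mem h, Finset.empty_union]

lemma stateOf_insert {A : Finset (Finset ℤ)} {u v : ℤ} (hu : u ∈ Vset) (hv : v ∈ Vset)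
    (huv : u ≠ v) (he : ({u, v} : Finset ℤ) ∉ A) :
    stateOf (insert {u, v} A) = stateOf A + wt u + wt v := by
  unfold stateOf
  rw [degb_insert he, degb_insert he, degb_insert he, degb_insert he,
    degb_insert he, degb_insert he, degb_insert he, degb_insert he]
  simp only [Finset.mem_insert, Finset.mem_singleton]
  clear he
  fin_cases hu <;> fin_cases hv <;>
    first
      | exact absurd rfl huv
      | (norm_num [wt]; omega)

lemma dig {A : Finset (Finset ℤ)} (h : ∀ v ∈ Vset, degb A v ≤ 2) :
    stateOf A / wt 1 % 4 = degb A 1 ∧ stateOf A / wt (-1) % 4 = degb A (-1) ∧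
    stateOf A / wt 2 % 4 = degb A 2 ∧ stateOf A / wt (-2) % 4 = degb A (-2) ∧
    stateOf A / wt 3 % 4 = degb A 3 ∧ stateOf A / wt (-3) % 4 = degb A (-3) ∧
    stateOf A / wt 4 % 4 = degb A 4 ∧ stateOf A / wt (-4) % 4 = degb A (-4) := by
  have h1 := h 1 (by decide)
  have h2 := h (-1) (by decide)
  have h3 := h 2 (by decide)
  have h4 := h (-2) (by decide)
  have h5 := h 3 (by decide)
  have h6 := h (-3) (by decide)
  have h7 := h 4 (by decide)
  have h8 := h (-4) (by decide)
  unfold stateOf wt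
  norm_num
  omega

structure Elem where
  edge : Finset ℤ
  wa : ℕ
  wb : ℕ
  fins : List (ℤ × ℕ)

def L24C : List Elem :=
  [⟨{(1 : ℤ), 2}, 1, 16, []⟩,
   ⟨{(1 : ℤ), -2}, 1, 64, []⟩,
   ⟨{(1 : ℤ), 3}, 1, 256, []⟩,
   ⟨{(1 : ℤ), -3}, 1, 1024, []⟩,
   ⟨{(1 : ℤ), 4}, 1, 4096, []⟩,
   ⟨{(1 : ℤ), -4}, 1, 16384, [((1 : ℤ), 1)]⟩,
   ⟨{(-1 : ℤ), 2}, 4, 16, []⟩,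
   ⟨{(-1 : ℤ), -2}, 4, 64, []⟩,
   ⟨{(-1 : ℤ), 3}, 4, 256, []⟩,
   ⟨{(-1 : ℤ), -3}, 4, 1024, []⟩,
   ⟨{(-1 : ℤ), 4}, 4, 4096, []⟩,
   ⟨{(-1 : ℤ), -4}, 4, 16384, [((-1 : ℤ), 4)]⟩,
   ⟨{(2 : ℤ), 3}, 16, 256, []⟩,
   ⟨{(2 : ℤ), -3}, 16, 1024, []⟩,
   ⟨{(2 : ℤ), 4}, 16, 4096, []⟩,
   ⟨{(2 : ℤ), -4}, 16, 16384, [((2 : ℤ), 16)]⟩,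
   ⟨{(-2 : ℤ), 3}, 64, 256, []⟩,
   ⟨{(-2 : ℤ), -3}, 64, 1024, []⟩,
   ⟨{(-2 : ℤ), 4}, 64, 4096, []⟩,
   ⟨{(-2 : ℤ), -4}, 64, 16384, [((-2 : ℤ), 64)]⟩,
   ⟨{(3 : ℤ), 4}, 256, 4096, []⟩,
   ⟨{(3 : ℤ), -4}, 256, 16384, [((3 : ℤ), 256)]⟩,
   ⟨{(-3 : ℤ), 4}, 1024, 4096, [((4 : ℤ), 4096)]⟩,
   ⟨{(-3 : ℤ), -4}, 1024, 16384, [((-3 : ℤ), 1024), ((-4 : ℤ), 16384)]⟩]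

def badB (s a b : ℕ) : Bool := decide (s / a % 4 = 3) || decide (s / b % 4 = 3)

def finB (s : ℕ) : List (ℤ × ℕ) → Bool :=
  List.rec true (fun vw _ ih => !decide (s / vw.2 % 4 = 1) && ih)

def goodS (s : ℕ) : Bool :=
  decide (s / 1 % 4 ≠ 1) && decide (s / 4 % 4 ≠ 1) && decide (s / 16 % 4 ≠ 1) &&
  decide (s / 64 % 4 ≠ 1) && decide (s / 256 % 4 ≠ 1) && decide (s / 1024 % 4 ≠ 1) &&
  decide (s / 4096 % 4 ≠ 1) && decide (s / 16384 % 4 ≠ 1)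

def leafB (acc : List (Finset ℤ)) (s : ℕ) : Bool :=
  !goodS s || decide (ConclB acc.toFinset)

def check (l : List Elem) : ℕ → List (Finset ℤ) → ℕ → Bool :=
  List.rec (motive := fun _ => ℕ → List (Finset ℤ) → ℕ → Bool)
    (fun k acc s =>
      match k with
      | 0 => leafB acc s
      | _ + 1 => true)
    (fun p _ ih k acc s =>
      match k with
      | 0 => leafB acc s
      | k + 1 =>
        (!finB s p.fins || ih (k + 1) acc s) &&
        (badB (s + p.wa + p.wb) p.wa p.wb || !finB (s + p.wa + p.wb) p.fins ||
          ih k (p.edge :: acc) (s + p.wa + p.wb)))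
    l

lemma check_nil_zero (acc s) : check [] 0 acc s = leafB acc s := rfl
lemma check_nil_succ (k acc s) : check [] (k + 1) acc s = true := rfl
lemma check_cons_zero (p es acc s) : check (p :: es) 0 acc s = leafB acc s := rfl
lemma check_cons_succ (p es k acc s) :
    check (p :: es) (k + 1) acc s =
      ((!finB s p.fins || check es (k + 1) acc s) &&
        (badB (s + p.wa + p.wb) p.wa p.wb || !finB (s + p.wa + p.wb) p.fins ||
          check es k (p.edge :: acc) (s + p.wa + p.wb))) := rfl

lemma finB_true_iff (s : ℕ) (l : List (ℤ × ℕ)) :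
    finB s l = true ↔ ∀ vw ∈ l, s / vw.2 % 4 ≠ 1 := by
  induction l with
  | nil => simp [finB]
  | cons vw tl ih =>
    show (!decide (s / vw.2 % 4 = 1) && finB s tl) = true ↔ _
    simp [ih]

def MaskOk (p : Elem) : Prop :=
  ∃ u v : ℤ, u ∈ Vset ∧ v ∈ Vset ∧ u ≠ v ∧ p.edge = {u, v} ∧ p.wa = wt u ∧ p.wb = wt v

lemma maskok : ∀ p ∈ L24C, MaskOk p := by
  intro p hp
  fin_cases hp
  · exact ⟨1, 2, by decide, by decide, by decide, rfl, rfl, rfl⟩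
  · exact ⟨1, -2, by decide, by decide, by decide, rfl, rfl, rfl⟩
  · exact ⟨1, 3, by decide, by decide, by decide, rfl, rfl, rfl⟩
  · exact ⟨1, -3, by decide, by decide, by decide, rfl, rfl, rfl⟩
  · exact ⟨1, 4, by decide, by decide, by decide, rfl, rfl, rfl⟩
  · exact ⟨1, -4, by decide, by decide, by decide, rfl, rfl, rfl⟩
  · exact ⟨-1, 2, by decide, by decide, by decide, rfl, rfl, rfl⟩
  · exact ⟨-1, -2, by decide, by decide, by decide, rfl, rfl, rfl⟩
  · exact ⟨-1, 3, by decide, by decide, by decide, rfl, rfl, rfl⟩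
  · exact ⟨-1, -3, by decide, by decide, by decide, rfl, rfl, rfl⟩
  · exact ⟨-1, 4, by decide, by decide, by decide, rfl, rfl, rfl⟩
  · exact ⟨-1, -4, by decide, by decide, by decide, rfl, rfl, rfl⟩
  · exact ⟨2, 3, by decide, by decide, by decide, rfl, rfl, rfl⟩
  · exact ⟨2, -3, by decide, by decide, by decide, rfl, rfl, rfl⟩
  · exact ⟨2, 4, by decide, by decide, by decide, rfl, rfl, rfl⟩
  · exact ⟨2, -4, by decide, by decide, by decide, rfl, rfl, rfl⟩
  · exact ⟨-2, 3, by decide, by decide, by decide, rfl, rfl, rfl⟩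
  · exact ⟨-2, -3, by decide, by decide, by decide, rfl, rfl, rfl⟩
  · exact ⟨-2, 4, by decide, by decide, by decide, rfl, rfl, rfl⟩
  · exact ⟨-2, -4, by decide, by decide, by decide, rfl, rfl, rfl⟩
  · exact ⟨3, 4, by decide, by decide, by decide, rfl, rfl, rfl⟩
  · exact ⟨3, -4, by decide, by decide, by decide, rfl, rfl, rfl⟩
  · exact ⟨-3, 4, by decide, by decide, by decide, rfl, rfl, rfl⟩
  · exact ⟨-3, -4, by decide, by decide, by decide, rfl, rfl, rfl⟩

lemma finsok : ∀ p ∈ L24C, ∀ vw ∈ p.fins, vw.1 ∈ Vset ∧ vw.2 = wt vw.1 := by decide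

lemma pairwiseok : List.Pairwise (fun p q => ∀ vw ∈ p.fins, vw.1 ∉ q.edge) L24C := by decide

set_option maxRecDepth 100000 in
lemma check_true : check L24C 6 [] 0 = true := by decide +kernel


lemma leaf_sound {acc : List (Finset ℤ)} {s : ℕ} (hs : s = stateOf acc.toFinset)
    (hg : Good acc.toFinset) (hc : leafB acc s = true) : ConclB acc.toFinset := by
  have hle : ∀ v ∈ Vset, degb acc.toFinset v ≤ 2 := by
    intro v hv
    rcases hg v hv with h | h <;> omega
  have hd := dig hle
  have hgs : goodS s = true := by
    subst hs
    unfold goodS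
    have g1 := hg 1 (by decide); have g2 := hg (-1) (by decide)
    have g3 := hg 2 (by decide); have g4 := hg (-2) (by decide)
    have g5 := hg 3 (by decide); have g6 := hg (-3) (by decide)
    have g7 := hg 4 (by decide); have g8 := hg (-4) (by decide)
    simp only [wt] at hd
    norm_num at hd ⊢
    omega
  unfold leafB at hc
  rw [hgs] at hc
  simpa using hc

lemma dig_at {A : Finset (Finset ℤ)} (h : ∀ v ∈ Vset, degb A v ≤ 2) {x : ℤ}
    (hx : x ∈ Vset) : stateOf A / wt x % 4 = degb A x := by
  have hd := dig h
  fin_cases hx <;> tauto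

lemma sound : ∀ (l : List Elem),
    (∀ p ∈ l, MaskOk p) →
    (∀ p ∈ l, ∀ vw ∈ p.fins, vw.1 ∈ Vset ∧ vw.2 = wt vw.1) →
    List.Pairwise (fun p q => ∀ vw ∈ p.fins, vw.1 ∉ q.edge) l →
    ∀ (k : ℕ) (acc : List (Finset ℤ)) (s : ℕ),
      s = stateOf acc.toFinset →
      check l k acc s = true →
      ∀ E : Finset (Finset ℤ), E.card = k →
        (∀ e ∈ E, ∃ p ∈ l, e = p.edge) →
        (∀ e ∈ E, e ∉ acc) →
        Good (E ∪ acc.toFinset) → ConclB (E ∪ acc.toFinset) := by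
  intro l
  induction l with
  | nil =>
    intro _ _ _ k acc s hs hc E hcard hsrc hdis hg
    match k, hc with
    | 0, hc =>
      have hE : E = ∅ := Finset.card_eq_zero.mp hcard
      subst hE
      rw [Finset.empty_union] at hg ⊢
      exact leaf_sound hs hg hc
    | k + 1, hc =>
      obtain ⟨e, he⟩ := Finset.card_pos.mp (by omega : 0 < E.card)
      obtain ⟨p, hp, -⟩ := hsrc e he
      exact absurd hp List.not_mem_nil
  | cons p es ih =>
    intro hmask hfins hpw k acc s hs hc E hcard hsrc hdis hg
    match k, hc with
    | 0, hc =>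
      have hE : E = ∅ := Finset.card_eq_zero.mp hcard
      subst hE
      rw [Finset.empty_union] at hg ⊢
      exact leaf_sound hs hg (by rwa [check_cons_zero] at hc)
    | k + 1, hc =>
      rw [check_cons_succ, Bool.and_eq_true] at hc
      obtain ⟨hcA, hcB⟩ := hc
      -- degree bound on the whole configuration
      have hle : ∀ v ∈ Vset, degb (E ∪ acc.toFinset) v ≤ 2 := by
        intro v hv
        rcases hg v hv with h | h <;> omega
      -- tail facts
      have hmask' : ∀ q ∈ es, MaskOk q := fun q hq => hmask q (List.mem_cons_of_mem _ hq)
      have hfins' : ∀ q ∈ es, ∀ vw ∈ q.fins, vw.1 ∈ Vset ∧ vw.2 = wt vw.1 :=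
        fun q hq => hfins q (List.mem_cons_of_mem _ hq)
      have hpw' : List.Pairwise (fun p q => ∀ vw ∈ p.fins, vw.1 ∉ q.edge) es :=
        (List.pairwise_cons.mp hpw).2
      have hplater : ∀ vw ∈ p.fins, ∀ q ∈ es, vw.1 ∉ q.edge := by
        intro vw hvw q hq
        exact (List.pairwise_cons.mp hpw).1 q hq vw hvw
      obtain ⟨u, v, hu, hv, huv, hedge, hwa, hwb⟩ := hmask p List.mem_cons_self
      by_cases hpE : p.edge ∈ E
      · -- include branch
        have hpacc : p.edge ∉ acc.toFinset := by
          rw [List.mem_toFinset]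
          exact hdis p.edge hpE
        have hs' : s + p.wa + p.wb = stateOf (p.edge :: acc).toFinset := by
          rw [List.toFinset_cons, hedge, stateOf_insert hu hv huv (hedge ▸ hpacc), hwa, hwb, hs]
        set E' := E.erase p.edge with hE'
        have hcard' : E'.card = k := by
          rw [hE', Finset.card_erase_of_mem hpE, hcard]
          omega
        have hsrc' : ∀ e ∈ E', ∃ q ∈ es, e = q.edge := by
          intro e he
          have hne := Finset.ne_of_mem_erase he
          obtain ⟨q, hq, hqe⟩ := hsrc e (Finset.mem_of_mem_erase he)
          rcases List.mem_cons.mp hq with rfl | hq'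
          · exact absurd hqe hne
          · exact ⟨q, hq', hqe⟩
        have hdis' : ∀ e ∈ E', e ∉ (p.edge :: acc) := by
          intro e he
          rw [List.mem_cons]
          rintro (rfl | h)
          · exact Finset.ne_of_mem_erase he rfl
          · exact hdis e (Finset.mem_of_mem_erase he) h
        have hunion : E' ∪ (p.edge :: acc).toFinset = E ∪ acc.toFinset := by
          rw [List.toFinset_cons]
          ext x
          simp only [Finset.mem_union, Finset.mem_erase, Finset.mem_insert, hE']
          constructor
          · rintro (⟨_, h⟩ | (rfl | h)) <;> tauto
          · rintro (h | h)
            · by_cases hx : x = p.edge <;> tauto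
            · tauto
        -- the new accumulator is inside the configuration
        have hsubacc : (p.edge :: acc).toFinset ⊆ E ∪ acc.toFinset := by
          rw [List.toFinset_cons]
          intro x hx
          rcases Finset.mem_insert.mp hx with rfl | hx
          · exact Finset.mem_union_left _ hpE
          · exact Finset.mem_union_right _ hx
        have hle' : ∀ w ∈ Vset, degb (p.edge :: acc).toFinset w ≤ 2 :=
          fun w hw => le_trans (degb_mono hsubacc w) (hle w hw)
        -- no edge of E' contains a finished vertex
        have hnotin : ∀ vw ∈ p.fins, ∀ e ∈ E', vw.1 ∉ e := by
          intro vw hvw e he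
          obtain ⟨q, hq, rfl⟩ := hsrc' e he
          exact hplater vw hvw q hq
        -- bad test is false
        have hbad : badB (s + p.wa + p.wb) p.wa p.wb = false := by
          unfold badB
          have d1 := dig_at hle' hu
          have d2 := dig_at hle' hv
          have b1 := hle' u hu
          have b2 := hle' v hv
          rw [hs', hwa, hwb]
          simp only [Bool.or_eq_false_iff, decide_eq_false_iff_not]
          omega
        -- fin test is true
        have hfin : finB (s + p.wa + p.wb) p.fins = true := by
          rw [finB_true_iff]
          intro vw hvw
          obtain ⟨hvV, hvw2⟩ := hfins p List.mem_cons_self vw hvw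
          have hdg := dig_at hle' hvV
          have hsame : degb (E' ∪ (p.edge :: acc).toFinset) vw.1 =
              degb (p.edge :: acc).toFinset vw.1 :=
            degb_union_eq (fun e he => hnotin vw hvw e he)
          rw [hunion] at hsame
          rcases hg vw.1 hvV with h0 | h2 <;> rw [hs', hvw2, hdg] <;> omega
        rw [hbad, hfin, Bool.false_or, Bool.not_true, Bool.false_or] at hcB
        have hres := ih hmask' hfins' hpw' k (p.edge :: acc) (s + p.wa + p.wb) hs' hcB
          E' hcard' hsrc' hdis' (hunion ▸ hg)
        rwa [hunion] at hres
      · -- skip branch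
        have hsrc' : ∀ e ∈ E, ∃ q ∈ es, e = q.edge := by
          intro e he
          obtain ⟨q, hq, hqe⟩ := hsrc e he
          rcases List.mem_cons.mp hq with rfl | hq'
          · exact absurd (hqe ▸ he) hpE
          · exact ⟨q, hq', hqe⟩
        have hnotin : ∀ vw ∈ p.fins, ∀ e ∈ E, vw.1 ∉ e := by
          intro vw hvw e he
          obtain ⟨q, hq, rfl⟩ := hsrc' e he
          exact hplater vw hvw q hq
        have hsubacc : acc.toFinset ⊆ E ∪ acc.toFinset := Finset.subset_union_right
        have hle' : ∀ w ∈ Vset, degb acc.toFinset w ≤ 2 :=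
          fun w hw => le_trans (degb_mono hsubacc w) (hle w hw)
        have hfin : finB s p.fins = true := by
          rw [finB_true_iff]
          intro vw hvw
          obtain ⟨hvV, hvw2⟩ := hfins p List.mem_cons_self vw hvw
          have hdg := dig_at hle' hvV
          have hsame : degb (E ∪ acc.toFinset) vw.1 = degb acc.toFinset vw.1 :=
            degb_union_eq (fun e he => hnotin vw hvw e he)
          rcases hg vw.1 hvV with h0 | h2 <;> rw [hs, hvw2, hdg] <;> omega
        rw [hfin, Bool.not_true, Bool.false_or] at hcA
        exact ih hmask' hfins' hpw' (k + 1) acc s hs hcA E hcard hsrc' hdis hg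


lemma stateOf_empty : stateOf ∅ = 0 := rfl

lemma face_src : ∀ u ∈ Vset, ∀ v ∈ Vset, |u| ≠ |v| →
    ∃ p ∈ L24C, ({u, v} : Finset ℤ) = p.edge := by decide

instance instIsFaceDec : DecidablePred IsFace := fun e =>
  inferInstanceAs (Decidable (∃ u ∈ Vset, ∃ v ∈ Vset, _ ∧ _))

lemma main_univ (E : Finset (Finset ℤ)) (h : SquaredStar E) (h6 : E.card = 6) : ConclB E := by
  obtain ⟨-, hface, hdeg, -⟩ := h
  have hsrc : ∀ e ∈ E, ∃ p ∈ L24C, e = p.edge := by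
    intro e he
    obtain ⟨u, hu, v, hv, hne, rfl⟩ := hface e he
    exact face_src u hu v hv hne
  have hgood : Good E := by
    intro v hv
    by_cases hex : ∃ e ∈ E, v ∈ e
    · exact Or.inr (hdeg v hex)
    · refine Or.inl (Finset.card_eq_zero.mpr (Finset.filter_eq_empty_iff.mpr ?_))
      intro e he hve
      exact hex ⟨e, he, hve⟩
  have h0 : (0 : ℕ) = stateOf ([] : List (Finset ℤ)).toFinset := by
    rw [List.toFinset_nil, stateOf_empty]
  have hres := sound L24C maskok finsok pairwiseok 6 [] 0 h0 check_true E h6 hsrc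
    (fun e _ h => absurd h List.not_mem_nil)
    (by rwa [List.toFinset_nil, Finset.union_empty])
  rwa [List.toFinset_nil, Finset.union_empty] at hres

lemma symm_r (E : Finset (Finset ℤ)) :
    Symmetric (fun a b => a ∈ E ∧ b ∈ E ∧ (a ∩ b).Nonempty) := by
  rintro a b ⟨h1, h2, h3⟩
  exact ⟨h2, h1, by rwa [Finset.inter_comm]⟩

lemma cycle_conn {e1 e2 e3 e4 e5 e6 : Finset ℤ} {E : Finset (Finset ℤ)}
    (hE : E = {e1, e2, e3, e4, e5, e6})
    (h12 : (e1 ∩ e2).Nonempty) (h23 : (e2 ∩ e3).Nonempty) (h34 : (e3 ∩ e4).Nonempty)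
    (h45 : (e4 ∩ e5).Nonempty) (h56 : (e5 ∩ e6).Nonempty) (h61 : (e6 ∩ e1).Nonempty) :
    ∀ e ∈ E, ∀ f ∈ E,
      Relation.ReflTransGen (fun a b => a ∈ E ∧ b ∈ E ∧ (a ∩ b).Nonempty) e f := by
  set r := fun a b => a ∈ E ∧ b ∈ E ∧ (a ∩ b).Nonempty with hr
  have m1 : e1 ∈ E := by rw [hE]; simp
  have m2 : e2 ∈ E := by rw [hE]; simp
  have m3 : e3 ∈ E := by rw [hE]; simp
  have m4 : e4 ∈ E := by rw [hE]; simp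
  have m5 : e5 ∈ E := by rw [hE]; simp
  have m6 : e6 ∈ E := by rw [hE]; simp
  have r12 : r e1 e2 := ⟨m1, m2, h12⟩
  have r23 : r e2 e3 := ⟨m2, m3, h23⟩
  have r34 : r e3 e4 := ⟨m3, m4, h34⟩
  have r16 : r e1 e6 := ⟨m1, m6, by rwa [Finset.inter_comm]⟩
  have r65 : r e6 e5 := ⟨m6, m5, by rwa [Finset.inter_comm]⟩
  have hub : ∀ e ∈ E, Relation.ReflTransGen r e1 e := by
    intro e he
    rw [hE] at he
    simp only [Finset.mem_insert, Finset.mem_singleton] at he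
    rcases he with rfl | rfl | rfl | rfl | rfl | rfl
    · exact .refl
    · exact .single r12
    · exact (Relation.ReflTransGen.single r12).tail r23
    · exact ((Relation.ReflTransGen.single r12).tail r23).tail r34
    · exact (Relation.ReflTransGen.single r16).tail r65
    · exact .single r16
  intro e he f hf
  haveI : Std.Symm (Relation.ReflTransGen r) :=
    @Relation.ReflTransGen.stdSymm _ r ⟨fun a b h => symm_r E h⟩
  exact (Std.Symm.symm _ _ (hub e he)).trans (hub f hf)

def Ex1 : Finset (Finset ℤ) := {{1,2}, {2,-1}, {-1,-2}, {-2,3}, {3,4}, {4,1}}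
def Ex2 : Finset (Finset ℤ) := {{1,2}, {2,3}, {3,4}, {4,-1}, {-1,-3}, {-3,1}}
def Ex3 : Finset (Finset ℤ) := {{1,2}, {2,3}, {3,-1}, {-1,-2}, {-2,-3}, {-3,1}}
def Ex4 : Finset (Finset ℤ) := {{1,2}, {2,-1}, {-1,3}, {3,4}, {4,-3}, {-3,1}}

lemma deg_explicit {E : Finset (Finset ℤ)}
    (h : ∀ v : ℤ, (∃ e ∈ E, v ∈ e) → ∃ a b : ℤ, v = a ∨ v = b) : True := trivial

lemma sqstar_ex1 : SquaredStar Ex1 := by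
  refine ⟨by decide, by decide, ?_, cycle_conn rfl (by decide) (by decide) (by decide)
    (by decide) (by decide) (by decide)⟩
  intro v hv
  obtain ⟨e, he, hve⟩ := hv
  fin_cases he <;> simp only [Finset.mem_insert, Finset.mem_singleton] at hve <;>
    rcases hve with rfl | rfl <;> decide

lemma sqstar_ex2 : SquaredStar Ex2 := by
  refine ⟨by decide, by decide, ?_, cycle_conn rfl (by decide) (by decide) (by decide)
    (by decide) (by decide) (by decide)⟩
  intro v hv
  obtain ⟨e, he, hve⟩ := hv
  fin_cases he <;> simp only [Finset.mem_insert, Finset.mem_singleton] at hve <;>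
    rcases hve with rfl | rfl <;> decide

lemma sqstar_ex3 : SquaredStar Ex3 := by
  refine ⟨by decide, by decide, ?_, cycle_conn rfl (by decide) (by decide) (by decide)
    (by decide) (by decide) (by decide)⟩
  intro v hv
  obtain ⟨e, he, hve⟩ := hv
  fin_cases he <;> simp only [Finset.mem_insert, Finset.mem_singleton] at hve <;>
    rcases hve with rfl | rfl <;> decide

lemma sqstar_ex4 : SquaredStar Ex4 := by
  refine ⟨by decide, by decide, ?_, cycle_conn rfl (by decide) (by decide) (by decide)
    (by decide) (by decide) (by decide)⟩
  intro v hv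
  obtain ⟨e, he, hve⟩ := hv
  fin_cases he <;> simp only [Finset.mem_insert, Finset.mem_singleton] at hve <;>
    rcases hve with rfl | rfl <;> decide


/-- A squared-star with exactly 6 faces has signature `{3,1,1,1}`,
`{2,1,1,1,1}` or `{2,2,2}`; in the last case the number of doubled planes of
adjacent type is 0 or 2, and all these possibilities are realized. -/
theorem signature_six_faces :
    (∀ E : Finset (Finset ℤ), SquaredStar E → E.card = 6 →
      (signatureOf E = {3, 1, 1, 1} ∨ signatureOf E = {2, 1, 1, 1, 1} ∨
        signatureOf E = {2, 2, 2}) ∧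
      (signatureOf E = {2, 2, 2} →
        adjDoubledCount E = 0 ∨ adjDoubledCount E = 2)) ∧
    (∃ E : Finset (Finset ℤ), SquaredStar E ∧ E.card = 6 ∧
      signatureOf E = {3, 1, 1, 1}) ∧
    (∃ E : Finset (Finset ℤ), SquaredStar E ∧ E.card = 6 ∧
      signatureOf E = {2, 1, 1, 1, 1}) ∧
    (∃ E : Finset (Finset ℤ), SquaredStar E ∧ E.card = 6 ∧
      signatureOf E = {2, 2, 2} ∧ adjDoubledCount E = 0) ∧
    (∃ E : Finset (Finset ℤ), SquaredStar E ∧ E.card = 6 ∧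
      signatureOf E = {2, 2, 2} ∧ adjDoubledCount E = 2) := by
  refine ⟨?_, ⟨Ex1, sqstar_ex1, by decide, by decide⟩,
    ⟨Ex2, sqstar_ex2, by decide, by decide⟩,
    ⟨Ex3, sqstar_ex3, by decide, by decide, by rw [adj_eq]; decide⟩,
    ⟨Ex4, sqstar_ex4, by decide, by decide, by rw [adj_eq]; decide⟩⟩
  intro E hSS h6
  obtain ⟨h1, h2⟩ := main_univ E hSS h6
  exact ⟨h1, fun hsig => by rw [adj_eq]; exact h2 hsig⟩
end
end

section
/- There is no squared-star with exactly 7 faces whose signature is {2,2,2,1}: no squared-star with 7 faces has three planes each containing exactly two of its faces and one plane containing exactly one of its faces. -/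
open scoped Classical
noncomputable section

/-- No squared-star with exactly 7 faces has signature `{2,2,2,1}`. -/
theorem no_seven_face_signature_2221 (E : Finset (Finset ℤ))
    (hE : SquaredStar E) (hcard : E.card = 7) :
    signatureOf E ≠ {2, 2, 2, 1} := by
  intro hsig
  obtain ⟨-, hface, hdeg, -⟩ := hE
  -- The singleton plane P₀
  have h1mem : (1 : ℕ) ∈ signatureOf E := by rw [hsig]; decide
  obtain ⟨P₀, hP₀s, hP₀1⟩ := Multiset.mem_map.mp h1mem
  -- every other plane in the image has count 2
  have h2s : ∀ P ∈ E.image planeOf, P ≠ P₀ → planeCount E P = 2 := by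
    obtain ⟨s', hs'⟩ := Multiset.exists_cons_of_mem hP₀s
    have hmap : (1 : ℕ) ::ₘ s'.map (planeCount E) = {2, 2, 2, 1} := by
      have h := hsig
      rw [signatureOf, hs', Multiset.map_cons, hP₀1] at h
      exact h
    have h2221 : ({2, 2, 2, 1} : Multiset ℕ) = (1 : ℕ) ::ₘ {2, 2, 2} := by decide
    rw [h2221, Multiset.cons_inj_right] at hmap
    intro P hP hne
    have hPs : P ∈ (E.image planeOf).val := hP
    rw [hs', Multiset.mem_cons] at hPs
    have hPs' : P ∈ s' := hPs.resolve_left hne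
    have : planeCount E P ∈ ({2, 2, 2} : Multiset ℕ) := by
      rw [← hmap]; exact Multiset.mem_map_of_mem _ hPs'
    simpa using this
  -- find a vertex class a > 0 in P₀
  obtain ⟨e₀, he₀E, he₀P⟩ := Finset.mem_image.mp hP₀s
  obtain ⟨u, hu, v, hv, huv, heuv⟩ := hface e₀ he₀E
  set a : ℤ := |u| with ha_def
  have ha : 0 < a := by
    have : u ≠ 0 := by intro h; rw [h] at hu; revert hu; decide
    exact abs_pos.mpr this
  have haP₀ : a ∈ P₀ := by
    rw [← he₀P, heuv]
    exact Finset.mem_image_of_mem _ (by simp)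
  -- membership in plane
  have lemA : ∀ e : Finset ℤ, a ∈ planeOf e ↔ a ∈ e ∨ -a ∈ e := by
    intro e
    simp only [planeOf, Finset.mem_image]
    constructor
    · rintro ⟨x, hx, hxa⟩
      rcases (abs_eq ha.le).mp hxa with h | h
      · left; rwa [← h]
      · right; rwa [← h]
    · rintro (h | h)
      · exact ⟨a, h, abs_of_pos ha⟩
      · exact ⟨-a, h, by rw [abs_neg, abs_of_pos ha]⟩
  -- no face contains both a and -a
  have lemB : ∀ e ∈ E, ¬(a ∈ e ∧ -a ∈ e) := by
    rintro e heE ⟨h1, h2⟩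
    obtain ⟨u', hu', v', hv', hne, he⟩ := hface e heE
    rw [he, Finset.mem_insert, Finset.mem_singleton] at h1 h2
    rcases h1 with h1 | h1 <;> rcases h2 with h2 | h2
    · omega
    · exact hne (by rw [← h1, ← h2, abs_neg])
    · exact hne (by rw [← h1, ← h2, abs_neg])
    · omega
  -- N := number of faces whose plane contains a
  set N : ℕ := (E.filter fun e => a ∈ planeOf e).card with hN_def
  -- N is even
  have hdeg2 : ∀ w : ℤ, (E.filter fun e => w ∈ e).card = 0 ∨
      (E.filter fun e => w ∈ e).card = 2 := by
    intro w
    rcases Finset.eq_empty_or_nonempty (E.filter fun e => w ∈ e) with h | h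
    · left; rw [h]; rfl
    · right
      obtain ⟨e, he⟩ := h
      rw [Finset.mem_filter] at he
      exact hdeg w ⟨e, he.1, he.2⟩
  have hNsplit : (E.filter fun e => a ∈ planeOf e) =
      (E.filter fun e => a ∈ e) ∪ (E.filter fun e => -a ∈ e) := by
    rw [← Finset.filter_or]
    exact Finset.filter_congr fun e _ => by rw [lemA e]
  have hNeven : N = (E.filter fun e => a ∈ e).card +
      (E.filter fun e => -a ∈ e).card := by
    rw [hN_def, hNsplit, Finset.card_union_of_disjoint]
    rw [Finset.disjoint_left]
    intro e h1 h2
    rw [Finset.mem_filter] at h1 h2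
    exact lemB e h1.1 ⟨h1.2, h2.2⟩
  -- N is odd : split off the plane P₀
  have hsplit2 : (E.filter fun e => a ∈ planeOf e) =
      (E.filter fun e => planeOf e = P₀) ∪
      (E.filter fun e => a ∈ planeOf e ∧ planeOf e ≠ P₀) := by
    ext e
    simp only [Finset.mem_filter, Finset.mem_union]
    constructor
    · rintro ⟨heE, hae⟩
      by_cases h : planeOf e = P₀
      · exact Or.inl ⟨heE, h⟩
      · exact Or.inr ⟨heE, hae, h⟩
    · rintro (⟨heE, h⟩ | ⟨heE, h, -⟩)
      · exact ⟨heE, h ▸ haP₀⟩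
      · exact ⟨heE, h⟩
  set T : Finset (Finset ℤ) :=
    E.filter fun e => a ∈ planeOf e ∧ planeOf e ≠ P₀ with hT_def
  have hNodd : N = 1 + T.card := by
    rw [hN_def, hsplit2, Finset.card_union_of_disjoint, ← hP₀1]
    · rfl
    · rw [Finset.disjoint_left]
      intro e h1 h2
      rw [Finset.mem_filter] at h1 h2
      exact h2.2.2 h1.2
  -- T.card is even
  have hTcard : T.card = ∑ P ∈ E.image planeOf,
      (T.filter fun e => planeOf e = P).card := by
    apply Finset.card_eq_sum_card_fiberwise
    intro e he
    rw [hT_def, Finset.mem_coe, Finset.mem_filter] at he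
    exact Finset.mem_image_of_mem _ he.1
  have hTeven : Even T.card := by
    rw [hTcard]
    apply Finset.even_sum
    intro P hP
    by_cases hPP₀ : P = P₀
    · have : (T.filter fun e => planeOf e = P) = ∅ := by
        ext e
        simp only [hT_def, Finset.mem_filter, Finset.notMem_empty, iff_false]
        rintro ⟨⟨-, -, hne⟩, h⟩
        exact hne (h.trans hPP₀)
      rw [this]; exact Even.zero
    · by_cases haP : a ∈ P
      · have : (T.filter fun e => planeOf e = P) =
            E.filter fun e => planeOf e = P := by
          ext e
          simp only [hT_def, Finset.mem_filter]
          constructor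
          · rintro ⟨⟨heE, -, -⟩, h⟩; exact ⟨heE, h⟩
          · rintro ⟨heE, h⟩
            exact ⟨⟨heE, h ▸ haP, fun hc => hPP₀ (h ▸ hc)⟩, h⟩
        rw [this]
        have := h2s P hP hPP₀
        rw [planeCount] at this
        rw [this]
        exact even_two
      · have : (T.filter fun e => planeOf e = P) = ∅ := by
          ext e
          simp only [hT_def, Finset.mem_filter, Finset.notMem_empty, iff_false]
          rintro ⟨⟨-, hae, -⟩, h⟩
          exact haP (h ▸ hae)
        rw [this]; exact Even.zero
  -- conclude
  obtain ⟨r, hr⟩ := hTeven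
  rcases hdeg2 a with h1 | h1 <;> rcases hdeg2 (-a) with h2 | h2 <;> omega
end
end

section
/- If a plane contains exactly two faces of a squared-star E and those two faces are disjoint (opposite type, i.e., of the form {a,b} and {-a,-b}), then E has at least 6 faces. -/
open scoped Classical
noncomputable section

lemma absne_ne {u v : ℤ} (h : |u| ≠ |v|) : u ≠ v := fun he => h (by rw [he])

lemma absne_ne_neg {u v : ℤ} (h : |u| ≠ |v|) : u ≠ -v := fun he => h (by rw [he, abs_neg])

lemma plane_pair (u v : ℤ) : planeOf {u, v} = {|u|, |v|} := by
  simp [planeOf]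

lemma exists_other_edge (E : Finset (Finset ℤ))
    (hdeg : ∀ v : ℤ, (∃ e ∈ E, v ∈ e) → (E.filter fun e => v ∈ e).card = 2)
    (v : ℤ) (e : Finset ℤ) (he : e ∈ E) (hve : v ∈ e) :
    ∃ a ∈ E, v ∈ a ∧ a ≠ e := by
  have h2 := hdeg v ⟨e, he, hve⟩
  obtain ⟨a, ha, hane⟩ :=
    Finset.exists_mem_ne (by omega : 1 < (E.filter fun a => v ∈ a).card) e
  rw [Finset.mem_filter] at ha
  exact ⟨a, ha.1, ha.2, hane⟩

lemma face_other {a : Finset ℤ} (ha : IsFace a) {p : ℤ} (hp : p ∈ a) :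
    ∃ w, a = {p, w} ∧ |w| ≠ |p| := by
  obtain ⟨x, hx, y, hy, hxy, rfl⟩ := ha
  rcases Finset.mem_insert.1 hp with rfl | hp'
  · exact ⟨y, rfl, hxy.symm⟩
  · rw [Finset.mem_singleton] at hp'
    subst hp'
    exact ⟨x, Finset.pair_comm x p, hxy⟩

lemma antipodal_pair {u v u' v' : ℤ} (huv : |u| ≠ |v|) (huv' : |u'| ≠ |v'|)
    (hplane : ({|u'|, |v'|} : Finset ℤ) = {|u|, |v|})
    (hdisj : ({u, v} : Finset ℤ) ∩ {u', v'} = ∅) :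
    ({u', v'} : Finset ℤ) = {-u, -v} := by
  have hd := Finset.eq_empty_iff_forall_notMem.mp hdisj
  have hu'u : u' ≠ u := fun h => hd u' (by simp [Finset.mem_inter, h])
  have hu'v : u' ≠ v := fun h => hd u' (by simp [Finset.mem_inter, h])
  have hv'u : v' ≠ u := fun h => hd v' (by simp [Finset.mem_inter, h])
  have hv'v : v' ≠ v := fun h => hd v' (by simp [Finset.mem_inter, h])
  have hmu : |u'| = |u| ∨ |u'| = |v| := by
    have : |u'| ∈ ({|u|, |v|} : Finset ℤ) := by rw [← hplane]; simp
    simpa using this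
  have hmv : |v'| = |u| ∨ |v'| = |v| := by
    have : |v'| ∈ ({|u|, |v|} : Finset ℤ) := by rw [← hplane]; simp
    simpa using this
  rcases hmu with h1 | h1
  · have hu'' : u' = -u := by
      rcases abs_eq_abs.mp h1 with h | h
      · exact absurd h hu'u
      · exact h
    have h2 : |v'| = |v| := by
      rcases hmv with h | h
      · exact absurd (h1.trans h.symm) huv'
      · exact h
    have hv'' : v' = -v := by
      rcases abs_eq_abs.mp h2 with h | h
      · exact absurd h hv'v
      · exact h
    rw [hu'', hv'']
  · have hu'' : u' = -v := by
      rcases abs_eq_abs.mp h1 with h | h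
      · exact absurd h hu'v
      · exact h
    have h2 : |v'| = |u| := by
      rcases hmv with h | h
      · exact h
      · exact absurd (h1.trans h.symm) huv'
    have hv'' : v' = -u := by
      rcases abs_eq_abs.mp h2 with h | h
      · exact absurd h hv'u
      · exact h
    rw [hu'', hv'', Finset.pair_comm]

/-- If a plane contains exactly two faces of a squared-star and those two faces
are disjoint (opposite type), then the squared-star has at least 6 faces. -/
theorem opposite_type_needs_six_faces (E : Finset (Finset ℤ))
    (hE : SquaredStar E) (P : Finset ℤ) (hP : planeCount E P = 2)
    (hopp : ∃ e ∈ E, ∃ f ∈ E, e ≠ f ∧ planeOf e = P ∧ planeOf f = P ∧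
      e ∩ f = ∅) :
    6 ≤ E.card := by
  obtain ⟨hcard3, hfaces, hdeg, hconn⟩ := hE
  obtain ⟨e, he, f, hf, hef, hpe, hpf, hdisj⟩ := hopp
  -- any face of E whose plane is P equals e or f
  have hmemP : ∀ g ∈ E, planeOf g = P → g = e ∨ g = f := by
    intro g hg hpg
    by_contra hcon
    push_neg at hcon
    have hsub : ({g, e, f} : Finset (Finset ℤ)) ⊆ E.filter fun x => planeOf x = P := by
      intro x hx
      simp only [Finset.mem_insert, Finset.mem_singleton] at hx
      rcases hx with rfl | rfl | rfl
      · exact Finset.mem_filter.2 ⟨hg, hpg⟩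
      · exact Finset.mem_filter.2 ⟨he, hpe⟩
      · exact Finset.mem_filter.2 ⟨hf, hpf⟩
    have h3 : ({g, e, f} : Finset (Finset ℤ)).card = 3 := by
      rw [Finset.card_insert_of_notMem (by simp [hcon.1, hcon.2]),
        Finset.card_insert_of_notMem (by simp [hef]), Finset.card_singleton]
    have hle := Finset.card_le_card hsub
    rw [h3] at hle
    rw [planeCount] at hP
    omega
  obtain ⟨u, hu, v, hv, huv, heq⟩ := hfaces e he
  obtain ⟨u', hu', v', hv', huv', hfeq⟩ := hfaces f hf
  subst heq hfeq
  have hu0 : u ≠ 0 := by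
    simp only [Vset, Finset.mem_insert, Finset.mem_singleton] at hu; omega
  have hv0 : v ≠ 0 := by
    simp only [Vset, Finset.mem_insert, Finset.mem_singleton] at hv; omega
  have hplanes : ({|u'|, |v'|} : Finset ℤ) = {|u|, |v|} := by
    rw [← plane_pair, ← plane_pair, hpf, hpe]
  have hfud : ({u', v'} : Finset ℤ) = {-u, -v} := antipodal_pair huv huv' hplanes hdisj
  -- P is the plane of e
  have hPeq : P = ({|u|, |v|} : Finset ℤ) := by rw [← hpe, plane_pair]
  -- membership facts
  have hue : u ∈ ({u, v} : Finset ℤ) := by simp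
  have hve : v ∈ ({u, v} : Finset ℤ) := by simp
  have hnuf : -u ∈ ({u', v'} : Finset ℤ) := by rw [hfud]; simp
  have hnvf : -v ∈ ({u', v'} : Finset ℤ) := by rw [hfud]; simp
  have hunf : u ∉ ({u', v'} : Finset ℤ) := by
    rw [hfud]
    simp only [Finset.mem_insert, Finset.mem_singleton]
    push_neg
    constructor
    · omega
    · exact absne_ne_neg huv
  have hvnf : v ∉ ({u', v'} : Finset ℤ) := by
    rw [hfud]
    simp only [Finset.mem_insert, Finset.mem_singleton]
    push_neg
    constructor
    · exact absne_ne_neg huv.symm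
    · omega
  -- the four second edges
  obtain ⟨a, haE, hua, hane⟩ := exists_other_edge E hdeg u _ he hue
  obtain ⟨b, hbE, hvb, hbne⟩ := exists_other_edge E hdeg v _ he hve
  obtain ⟨c, hcE, huc, hcnf⟩ := exists_other_edge E hdeg (-u) _ hf hnuf
  obtain ⟨d, hdE, hvd, hdnf⟩ := exists_other_edge E hdeg (-v) _ hf hnvf
  -- structure of a, b, c, d
  obtain ⟨wa, haeq, hwa1⟩ := face_other (hfaces a haE) hua
  obtain ⟨wb, hbeq, hwb1⟩ := face_other (hfaces b hbE) hvb
  obtain ⟨wc, hceq, hwc1⟩ := face_other (hfaces c hcE) huc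
  obtain ⟨wd, hdeq, hwd1⟩ := face_other (hfaces d hdE) hvd
  -- a ≠ f and b ≠ f, c ≠ e, d ≠ e
  have hanf : a ≠ ({u', v'} : Finset ℤ) := fun h => hunf (h ▸ hua)
  have hbnf : b ≠ ({u', v'} : Finset ℤ) := fun h => hvnf (h ▸ hvb)
  have hcne : c ≠ ({u, v} : Finset ℤ) := by
    intro h
    rw [h] at huc
    simp only [Finset.mem_insert, Finset.mem_singleton] at huc
    rcases huc with h' | h'
    · omega
    · exact (absne_ne_neg huv.symm) (by omega)
  have hdne : d ≠ ({u, v} : Finset ℤ) := by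
    intro h
    rw [h] at hvd
    simp only [Finset.mem_insert, Finset.mem_singleton] at hvd
    rcases hvd with h' | h'
    · exact (absne_ne_neg huv) (by omega)
    · omega
  -- the second endpoints leave the plane P
  have key : ∀ g ∈ E, g ≠ ({u, v} : Finset ℤ) → g ≠ ({u', v'} : Finset ℤ) →
      ∀ p w : ℤ, g = {p, w} → |w| ≠ |p| → |p| = |u| ∨ |p| = |v| →
      |w| ≠ |u| ∧ |w| ≠ |v| := by
    intro g hg hge hgf p w hgeq hpw hpin
    have hwne : planeOf g ≠ P := by
      intro h
      rcases hmemP g hg h with h' | h'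
      · exact hge h'
      · exact hgf h'
    rw [hgeq, plane_pair, hPeq] at hwne
    constructor
    · intro hwu
      rcases hpin with h' | h'
      · exact hpw (hwu.trans h'.symm)
      · exact hwne (by rw [hwu, h']; exact Finset.pair_comm _ _)
    · intro hwv
      rcases hpin with h' | h'
      · exact hwne (by rw [hwv, h'])
      · exact hpw (hwv.trans h'.symm)
  obtain ⟨hwau, hwav⟩ := key a haE hane hanf u wa haeq hwa1 (Or.inl rfl)
  obtain ⟨hwbu, hwbv⟩ := key b hbE hbne hbnf v wb hbeq hwb1 (Or.inr rfl)
  obtain ⟨hwcu, hwcv⟩ := key c hcE hcne hcnf (-u) wc hceq hwc1 (Or.inl (abs_neg u))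
  obtain ⟨hwdu, hwdv⟩ := key d hdE hdne hdnf (-v) wd hdeq hwd1 (Or.inr (abs_neg v))
  -- pairwise distinctness of a, b, c, d
  have hab : a ≠ b := by
    intro h
    rw [haeq, hbeq] at h
    have hm : v ∈ ({u, wa} : Finset ℤ) := by rw [h]; simp
    simp only [Finset.mem_insert, Finset.mem_singleton] at hm
    rcases hm with h' | h'
    · exact absne_ne huv h'.symm
    · exact hwav (by rw [← h'])
  have hac : a ≠ c := by
    intro h
    rw [haeq, hceq] at h
    have hm : -u ∈ ({u, wa} : Finset ℤ) := by rw [h]; simp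
    simp only [Finset.mem_insert, Finset.mem_singleton] at hm
    rcases hm with h' | h'
    · omega
    · exact hwau (by rw [← h', abs_neg])
  have had : a ≠ d := by
    intro h
    rw [haeq, hdeq] at h
    have hm : -v ∈ ({u, wa} : Finset ℤ) := by rw [h]; simp
    simp only [Finset.mem_insert, Finset.mem_singleton] at hm
    rcases hm with h' | h'
    · exact absne_ne_neg huv h'.symm
    · exact hwav (by rw [← h', abs_neg])
  have hbc : b ≠ c := by
    intro h
    rw [hbeq, hceq] at h
    have hm : -u ∈ ({v, wb} : Finset ℤ) := by rw [h]; simp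
    simp only [Finset.mem_insert, Finset.mem_singleton] at hm
    rcases hm with h' | h'
    · exact absne_ne_neg huv.symm h'.symm
    · exact hwbu (by rw [← h', abs_neg])
  have hbd : b ≠ d := by
    intro h
    rw [hbeq, hdeq] at h
    have hm : -v ∈ ({v, wb} : Finset ℤ) := by rw [h]; simp
    simp only [Finset.mem_insert, Finset.mem_singleton] at hm
    rcases hm with h' | h'
    · omega
    · exact hwbv (by rw [← h', abs_neg])
  have hcd : c ≠ d := by
    intro h
    rw [hceq, hdeq] at h
    have hm : -v ∈ ({-u, wc} : Finset ℤ) := by rw [h]; simp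
    simp only [Finset.mem_insert, Finset.mem_singleton] at hm
    rcases hm with h' | h'
    · exact absne_ne huv (by omega)
    · exact hwcv (by rw [← h', abs_neg])
  -- conclude
  have hsub : ({{u, v}, {u', v'}, a, b, c, d} : Finset (Finset ℤ)) ⊆ E := by
    intro x hx
    simp only [Finset.mem_insert, Finset.mem_singleton] at hx
    rcases hx with rfl | rfl | rfl | rfl | rfl | rfl <;> assumption
  have h6 : ({{u, v}, {u', v'}, a, b, c, d} : Finset (Finset ℤ)).card = 6 := by
    rw [Finset.card_insert_of_notMem (by
        simp only [Finset.mem_insert, Finset.mem_singleton]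
        push_neg
        exact ⟨hef, hane.symm, hbne.symm, hcne.symm, hdne.symm⟩),
      Finset.card_insert_of_notMem (by
        simp only [Finset.mem_insert, Finset.mem_singleton]
        push_neg
        exact ⟨hanf.symm, hbnf.symm, hcnf.symm, hdnf.symm⟩),
      Finset.card_insert_of_notMem (by
        simp only [Finset.mem_insert, Finset.mem_singleton]
        push_neg
        exact ⟨hab, hac, had⟩),
      Finset.card_insert_of_notMem (by
        simp only [Finset.mem_insert, Finset.mem_singleton]
        push_neg
        exact ⟨hbc, hbd⟩),
      Finset.card_insert_of_notMem (by simpa using hcd),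
      Finset.card_singleton]
  have hle := Finset.card_le_card hsub
  omega
end
end
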